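/- arXiv:2004.03440 — 2 statements merged into one kernel-verified Lean document; each statement's English description precedes it below -/
import Mathlib

section
/- Let d ≥ 1 and let m be a real number with 0 ≤ m ≤ (1+√7)/2. Let h be a smooth, strictly positive solution on [0,T] of the Boussinesq equation ∂_t h − div(h ∇h) = 0 on 𝕋^d. Then for every t ∈ [0,T], (d/dt) ∫_{𝕋^d} h^m |∇h|^2 dx + (m/(m+1)) ∫_{𝕋^d} h^{m+1} (Δh)^2 dx + C_m ∫_{𝕋^d} h^{m-1} |∇h|^4 dx ≤ 0, where C_m = ((m+2)/(m+1)) · ((m+3)^2/36) − (m^2 − m + 2)/4, and moreover C_m ≥ 0 for all such m. -/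
open MeasureTheory Real

/-- Partial derivative `∂ᵢ f` of a function on `ℝᵈ` (as `EuclideanSpace`). -/
noncomputable def pder {d : ℕ} (i : Fin d) (f : EuclideanSpace ℝ (Fin d) → ℝ)
    (x : EuclideanSpace ℝ (Fin d)) : ℝ :=
  fderiv ℝ f x (EuclideanSpace.single i 1)

/-- The Laplacian `Δ f = ∑ᵢ ∂ᵢ∂ᵢ f`. -/
noncomputable def lap {d : ℕ} (f : EuclideanSpace ℝ (Fin d) → ℝ)
    (x : EuclideanSpace ℝ (Fin d)) : ℝ :=
  ∑ i, pder i (pder i f) x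

/-- Squared norm of the gradient, `|∇f|² = ∑ᵢ (∂ᵢ f)²`. -/
noncomputable def gradSq {d : ℕ} (f : EuclideanSpace ℝ (Fin d) → ℝ)
    (x : EuclideanSpace ℝ (Fin d)) : ℝ :=
  ∑ i, (pder i f x) ^ 2

/-- Squared Frobenius norm of the Hessian, `|∇∇f|² = ∑ᵢⱼ (∂ᵢ∂ⱼ f)²`. -/
noncomputable def hessSq {d : ℕ} (f : EuclideanSpace ℝ (Fin d) → ℝ)
    (x : EuclideanSpace ℝ (Fin d)) : ℝ :=
  ∑ i, ∑ j, (pder i (pder j f) x) ^ 2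

/-- The fundamental domain `[0,1)^d` of the torus `𝕋^d`. -/
def fundDom (d : ℕ) : Set (EuclideanSpace ℝ (Fin d)) :=
  {x | ∀ i, 0 ≤ x i ∧ x i < 1}

/-- `ℤ^d`-periodicity of a function on `ℝ^d`. -/
def ZPeriodic {d : ℕ} (f : EuclideanSpace ℝ (Fin d) → ℝ) : Prop :=
  ∀ (x : EuclideanSpace ℝ (Fin d)) (k : Fin d → ℤ),
    f (x + (WithLp.equiv 2 (Fin d → ℝ)).symm (fun i => (k i : ℝ))) = f x


lemma infty_add_one : ((⊤:ℕ∞) : WithTop ℕ∞) + 1 ≤ ((⊤:ℕ∞) : WithTop ℕ∞) := by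
  norm_num

lemma one_le_infty : ((⊤:ℕ∞) : WithTop ℕ∞) ≠ 0 := by
  simp

variable {V : Type*} [NormedAddCommGroup V] [NormedSpace ℝ V]

lemma contDiff_dv {f : V → ℝ} (hf : ContDiff ℝ (⊤:ℕ∞) f) (v : V) :
    ContDiff ℝ (⊤:ℕ∞) (fun x => fderiv ℝ f x v) :=
  (hf.fderiv_right infty_add_one).clm_apply contDiff_const

lemma dv_mul {f g : V → ℝ} {x : V} (hf : DifferentiableAt ℝ f x)
    (hg : DifferentiableAt ℝ g x) (v : V) :
    fderiv ℝ (fun x => f x * g x) x v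
      = f x * fderiv ℝ g x v + g x * fderiv ℝ f x v := by
  rw [fderiv_fun_mul hf hg]; simp [mul_comm]

lemma dv_sum {ι : Type*} (s : Finset ι) {f : ι → V → ℝ} {x : V}
    (hf : ∀ i ∈ s, DifferentiableAt ℝ (f i) x) (v : V) :
    fderiv ℝ (fun x => ∑ i ∈ s, f i x) x v = ∑ i ∈ s, fderiv ℝ (f i) x v := by
  rw [fderiv_fun_sum hf]; simp

lemma dv_rpow {f : V → ℝ} {x : V} (hf : DifferentiableAt ℝ f x)
    (hpos : 0 < f x) (m : ℝ) (v : V) :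
    fderiv ℝ (fun x => f x ^ m) x v = m * f x ^ (m - 1) * fderiv ℝ f x v := by
  have h := (Real.hasDerivAt_rpow_const (p := m) (Or.inl hpos.ne')).comp_hasFDerivAt x hf.hasFDerivAt
  have h' : HasFDerivAt (fun y => f y ^ m) ((m * f x ^ (m - 1)) • fderiv ℝ f x) x := h
  rw [h'.fderiv]; simp [mul_assoc]

lemma dv_sq {f : V → ℝ} {x : V} (hf : DifferentiableAt ℝ f x) (v : V) :
    fderiv ℝ (fun x => f x ^ 2) x v = 2 * f x * fderiv ℝ f x v := by
  have h := (hasDerivAt_pow 2 (f x)).comp_hasFDerivAt x hf.hasFDerivAt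
  have h' : HasFDerivAt (fun y => f y ^ 2) (((2:ℕ) * f x ^ (2 - 1)) • fderiv ℝ f x) x := h
  rw [h'.fderiv]; simp [mul_assoc]

lemma dv_comm {f : V → ℝ} (hf : ContDiff ℝ (⊤:ℕ∞) f) (x : V) (v w : V) :
    fderiv ℝ (fun y => fderiv ℝ f y v) x w = fderiv ℝ (fun y => fderiv ℝ f y w) x v := by
  have hd : ContDiff ℝ (⊤:ℕ∞) (fderiv ℝ f) := hf.fderiv_right infty_add_one
  have hd' : DifferentiableAt ℝ (fderiv ℝ f) x := hd.differentiable one_le_infty x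
  have key : ∀ u : V, fderiv ℝ (fun y => fderiv ℝ f y u) x
      = (fderiv ℝ (fderiv ℝ f) x).flip u := by
    intro u
    have h1 : (fun y => fderiv ℝ f y u)
        = (⇑(ContinuousLinearMap.apply ℝ ℝ u)) ∘ (fderiv ℝ f) := rfl
    rw [h1, fderiv_comp x (ContinuousLinearMap.apply ℝ ℝ u).differentiableAt hd']
    ext w'
    simp [ContinuousLinearMap.apply]
  rw [key v, key w]
  have := second_derivative_symmetric
    (f' := fderiv ℝ f) (f'' := fderiv ℝ (fderiv ℝ f) x) (x := x)
    (fun y => (hf.differentiable one_le_infty y).hasFDerivAt) hd'.hasFDerivAt w v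
  simp only [ContinuousLinearMap.flip_apply]
  exact this
section PderAPI
variable {d : ℕ}
local notation "E" => EuclideanSpace ℝ (Fin d)

lemma contDiff_pder {f : E → ℝ} (hf : ContDiff ℝ (⊤:ℕ∞) f) (i : Fin d) :
    ContDiff ℝ (⊤:ℕ∞) (pder i f) := contDiff_dv hf _

lemma pder_mul {f g : E → ℝ} {x : E} (hf : DifferentiableAt ℝ f x)
    (hg : DifferentiableAt ℝ g x) (i : Fin d) :
    pder i (fun x => f x * g x) x = f x * pder i g x + g x * pder i f x :=
  dv_mul hf hg _

lemma pder_sum {ι : Type*} (s : Finset ι) {f : ι → E → ℝ} {x : E}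
    (hf : ∀ j ∈ s, DifferentiableAt ℝ (f j) x) (i : Fin d) :
    pder i (fun x => ∑ j ∈ s, f j x) x = ∑ j ∈ s, pder i (f j) x := dv_sum s hf _

lemma pder_rpow {f : E → ℝ} {x : E} (hf : DifferentiableAt ℝ f x)
    (hpos : 0 < f x) (m : ℝ) (i : Fin d) :
    pder i (fun x => f x ^ m) x = m * f x ^ (m - 1) * pder i f x := dv_rpow hf hpos m _

lemma pder_sq {f : E → ℝ} {x : E} (hf : DifferentiableAt ℝ f x) (i : Fin d) :
    pder i (fun x => f x ^ 2) x = 2 * f x * pder i f x := dv_sq hf _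

lemma pder_comm {f : E → ℝ} (hf : ContDiff ℝ (⊤:ℕ∞) f) (i j : Fin d) (x : E) :
    pder i (pder j f) x = pder j (pder i f) x := dv_comm hf x _ _

lemma zperiodic_pder {f : E → ℝ} (hd : Differentiable ℝ f) (hf : ZPeriodic f) (i : Fin d) :
    ZPeriodic (pder i f) := by
  intro x k
  set c : E := (WithLp.equiv 2 (Fin d → ℝ)).symm (fun i => (k i : ℝ)) with hc
  have hfun : (fun y => f (y + c)) = f := by
    funext y; exact hf y k
  have h1 : HasFDerivAt (fun y => f (y + c)) (fderiv ℝ f (x + c)) x :=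
    (hd (x + c)).hasFDerivAt.comp x ((hasFDerivAt_id x).add_const c)
  unfold pder
  rw [← h1.fderiv, hfun]
end PderAPI
section TorusDiv

lemma pi_single_int_cast {n : ℕ} (i : Fin n) :
    (fun j => ((Pi.single i (1:ℤ) : Fin n → ℤ) j : ℝ)) = Pi.single i (1:ℝ) := by
  funext j
  rcases eq_or_ne j i with rfl | hj
  · simp
  · simp [Pi.single_eq_of_ne hj]

lemma insertNth_one_eq {n : ℕ} (i : Fin (n+1)) (y : Fin n → ℝ) :
    (i.insertNth (1:ℝ) y : Fin (n+1) → ℝ) = i.insertNth (0:ℝ) y + Pi.single i 1 := by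
  funext j
  rcases eq_or_ne j i with rfl | hj
  · simp
  · rcases Fin.exists_succAbove_eq hj with ⟨k, rfl⟩
    simp [Fin.insertNth_apply_succAbove, Pi.single_eq_of_ne (Fin.succAbove_ne i k)]

lemma torus_div {d : ℕ} (hd : 1 ≤ d) (F : Fin d → EuclideanSpace ℝ (Fin d) → ℝ)
    (hF : ∀ i, ContDiff ℝ (⊤:ℕ∞) (F i)) (hFper : ∀ i, ZPeriodic (F i)) :
    ∫ x in fundDom d, ∑ i, pder i (F i) x = 0 := by
  obtain ⟨n, rfl⟩ : ∃ n, d = n + 1 := ⟨d - 1, (Nat.succ_pred_eq_of_pos hd).symm⟩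
  set L : (Fin (n+1) → ℝ) →L[ℝ] EuclideanSpace ℝ (Fin (n+1)) :=
    (PiLp.continuousLinearEquiv 2 ℝ (fun _ : Fin (n+1) => ℝ)).symm.toContinuousLinearMap with hL
  have hLcoe : ⇑L = ⇑(WithLp.equiv 2 (Fin (n+1) → ℝ)).symm := rfl
  have hψvol : MeasurePreserving (⇑(WithLp.equiv 2 (Fin (n+1) → ℝ)).symm)
      volume volume := PiLp.volume_preserving_toLp (Fin (n+1))
  have hψemb : MeasurableEmbedding (⇑(WithLp.equiv 2 (Fin (n+1) → ℝ)).symm) := by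
    exact (MeasurableEquiv.toLp 2 (Fin (n+1) → ℝ)).measurableEmbedding
  have hpre : (⇑(WithLp.equiv 2 (Fin (n+1) → ℝ)).symm) ⁻¹' (fundDom (n+1))
      = Set.univ.pi (fun _ : Fin (n+1) => Set.Ico (0:ℝ) 1) := by
    ext y
    simp [fundDom, Set.mem_pi, Set.mem_Ico]
  have step1 : ∫ x in fundDom (n+1), ∑ i, pder i (F i) x
      = ∫ y in Set.univ.pi (fun _ : Fin (n+1) => Set.Ico (0:ℝ) 1),
          ∑ i, pder i (F i) (L y) := by
    rw [← hψvol.setIntegral_preimage_emb hψemb, hpre, hLcoe]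
  have step2 : ∫ y in Set.univ.pi (fun _ : Fin (n+1) => Set.Ico (0:ℝ) 1),
          ∑ i, pder i (F i) (L y)
      = ∫ y in Set.Icc (fun _ : Fin (n+1) => (0:ℝ)) (fun _ => 1),
          ∑ i, pder i (F i) (L y) :=
    setIntegral_congr_set Measure.univ_pi_Ico_ae_eq_Icc
  rw [step1, step2]
  have hdiv := MeasureTheory.integral_divergence_of_hasFDerivAt_off_countable'
    (fun _ : Fin (n+1) => (0:ℝ)) (fun _ => (1:ℝ))
    (fun i => by norm_num)
    (fun i y => F i (L y))
    (fun i y => (fderiv ℝ (F i) (L y)).comp L)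
    ∅ Set.countable_empty
    (fun i => (((hF i).continuous).comp L.continuous).continuousOn)
    (fun y _ i => (((hF i).differentiable one_le_infty (L y)).hasFDerivAt).comp y L.hasFDerivAt)
    ?hi
  case hi =>
    have : Continuous fun y => ∑ i, ((fderiv ℝ (F i) (L y)).comp L) (Pi.single i 1) := by
      refine continuous_finset_sum _ fun i _ => ?_
      have h1 : Continuous fun x => fderiv ℝ (F i) x (L (Pi.single i 1)) :=
        (contDiff_dv (hF i) _).continuous
      exact h1.comp L.continuous
    exact this.integrableOn_Icc
  have hL1 : ∀ i : Fin (n+1), L (Pi.single i 1) = EuclideanSpace.single i (1:ℝ) := fun i => rfl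
  have hintg : ∀ y, ∑ i, ((fderiv ℝ (F i) (L y)).comp L) (Pi.single i 1)
      = ∑ i, pder i (F i) (L y) := by
    intro y
    refine Finset.sum_congr rfl fun i _ => ?_
    rw [ContinuousLinearMap.comp_apply, hL1]
    rfl
  rw [show (∫ y in Set.Icc (fun _ : Fin (n+1) => (0:ℝ)) (fun _ => 1),
        ∑ i, pder i (F i) (L y))
      = ∫ y in Set.Icc (fun _ : Fin (n+1) => (0:ℝ)) (fun _ => 1),
        ∑ i, ((fderiv ℝ (F i) (L y)).comp L) (Pi.single i 1) from
    setIntegral_congr_fun measurableSet_Icc (fun y _ => (hintg y).symm)]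
  rw [hdiv]
  refine Finset.sum_eq_zero fun i _ => ?_
  rw [sub_eq_zero]
  refine setIntegral_congr_fun measurableSet_Icc (fun y _ => ?_)
  have : L (i.insertNth (1:ℝ) y) = L (i.insertNth (0:ℝ) y)
      + (WithLp.equiv 2 (Fin (n+1) → ℝ)).symm
          (fun j => ((Pi.single i (1:ℤ) : Fin (n+1) → ℤ) j : ℝ)) := by
    rw [insertNth_one_eq, map_add, pi_single_int_cast]
    rfl
  show F i (L (i.insertNth (1:ℝ) y)) = F i (L (i.insertNth (0:ℝ) y))
  rw [this, hFper i (L (i.insertNth (0:ℝ) y)) (Pi.single i (1:ℤ))]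

end TorusDiv
section FundDom
variable {d : ℕ}

lemma fundDom_eq_preimage :
    fundDom d = (⇑(PiLp.continuousLinearEquiv 2 ℝ (fun _ : Fin d => ℝ)))
      ⁻¹' (Set.univ.pi fun _ => Set.Ico (0:ℝ) 1) := by
  ext x; simp [fundDom, Set.mem_pi]

lemma measurableSet_fundDom : MeasurableSet (fundDom d) := by
  rw [fundDom_eq_preimage]
  exact (MeasurableSet.univ_pi fun _ => measurableSet_Ico).preimage
    (PiLp.continuousLinearEquiv 2 ℝ (fun _ : Fin d => ℝ)).continuous.measurable

lemma fundDom_subset_compact :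
    fundDom d ⊆ (PiLp.continuousLinearEquiv 2 ℝ (fun _ : Fin d => ℝ)).symm ''
      (Set.Icc (fun _ => (0:ℝ)) (fun _ => 1)) := by
  intro x hx
  refine ⟨PiLp.continuousLinearEquiv 2 ℝ (fun _ : Fin d => ℝ) x, ?_, by simp⟩
  constructor <;> intro i
  · exact (hx i).1
  · exact (hx i).2.le

lemma isCompact_fundDom_compact :
    IsCompact ((PiLp.continuousLinearEquiv 2 ℝ (fun _ : Fin d => ℝ)).symm ''
      (Set.Icc (fun _ => (0:ℝ)) (fun _ => 1))) :=
  isCompact_Icc.image (PiLp.continuousLinearEquiv 2 ℝ (fun _ : Fin d => ℝ)).symm.continuous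

lemma integrableOn_fundDom {f : EuclideanSpace ℝ (Fin d) → ℝ} (hf : Continuous f) :
    IntegrableOn f (fundDom d) :=
  ((hf.continuousOn).integrableOn_compact isCompact_fundDom_compact).mono_set
    fundDom_subset_compact

lemma volume_fundDom_lt_top : MeasureTheory.volume (fundDom d) < ⊤ :=
  lt_of_le_of_lt (measure_mono fundDom_subset_compact)
    isCompact_fundDom_compact.measure_lt_top

end FundDom
section Slice
variable {d : ℕ}

lemma pder_slice (h : ℝ × EuclideanSpace ℝ (Fin d) → ℝ) (hdiff : Differentiable ℝ h)
    (s : ℝ) (x : EuclideanSpace ℝ (Fin d)) (i : Fin d) :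
    pder i (fun y => h (s, y)) x = fderiv ℝ h (s, x) (0, EuclideanSpace.single i 1) := by
  have hcurve : HasFDerivAt (fun y : EuclideanSpace ℝ (Fin d) => (s, y))
      (((0 : EuclideanSpace ℝ (Fin d) →L[ℝ] ℝ)).prod (ContinuousLinearMap.id ℝ _)) x :=
    (hasFDerivAt_const s x).prodMk (hasFDerivAt_id x)
  have hcomp : HasFDerivAt (fun y => h (s, y))
      ((fderiv ℝ h (s, x)).comp
        (((0 : EuclideanSpace ℝ (Fin d) →L[ℝ] ℝ)).prod (ContinuousLinearMap.id ℝ _))) x :=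
    (hdiff (s, x)).hasFDerivAt.comp x hcurve
  unfold pder
  rw [hcomp.fderiv]
  simp

lemma hasDerivAt_slice (h : ℝ × EuclideanSpace ℝ (Fin d) → ℝ) (hdiff : Differentiable ℝ h)
    (t : ℝ) (x : EuclideanSpace ℝ (Fin d)) :
    HasDerivAt (fun s => h (s, x)) (fderiv ℝ h (t, x) (1, 0)) t := by
  have hcurve : HasDerivAt (fun s : ℝ => (s, x)) ((1:ℝ), (0 : EuclideanSpace ℝ (Fin d))) t :=
    (hasDerivAt_id t).prodMk (hasDerivAt_const t x)
  exact (hdiff (t, x)).hasFDerivAt.comp_hasDerivAt t hcurve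

lemma deriv_slice (h : ℝ × EuclideanSpace ℝ (Fin d) → ℝ) (hdiff : Differentiable ℝ h)
    (t : ℝ) (x : EuclideanSpace ℝ (Fin d)) :
    deriv (fun s => h (s, x)) t = fderiv ℝ h (t, x) (1, 0) :=
  (hasDerivAt_slice h hdiff t x).deriv

lemma hasDerivAt_integral_fundDom (Φ : ℝ × EuclideanSpace ℝ (Fin d) → ℝ)
    (hΦ : ContDiff ℝ (⊤:ℕ∞) Φ) (t : ℝ) :
    HasDerivAt (fun s => ∫ x in fundDom d, Φ (s, x))
      (∫ x in fundDom d, fderiv ℝ Φ (t, x) (1, 0)) t := by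
  set K := (PiLp.continuousLinearEquiv 2 ℝ (fun _ : Fin d => ℝ)).symm ''
      (Set.Icc (fun _ => (0:ℝ)) (fun _ => 1)) with hK
  have hΦ'c : Continuous (fun p : ℝ × EuclideanSpace ℝ (Fin d) => fderiv ℝ Φ p (1, 0)) :=
    (contDiff_dv hΦ _).continuous
  obtain ⟨C, hC⟩ := (isCompact_Icc (a := t - 1) (b := t + 1)).prod
    isCompact_fundDom_compact |>.exists_bound_of_continuousOn hΦ'c.continuousOn
  have key := hasDerivAt_integral_of_dominated_loc_of_deriv_le
    (μ := MeasureTheory.volume.restrict (fundDom d))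
    (F := fun s x => Φ (s, x)) (F' := fun s x => fderiv ℝ Φ (s, x) (1, 0))
    (x₀ := t) (bound := fun _ => C) (s := Metric.ball t 1) (Metric.ball_mem_nhds t one_pos)
    (Filter.Eventually.of_forall fun s =>
      ((hΦ.continuous.comp (continuous_const.prodMk continuous_id)).aestronglyMeasurable))
    (integrableOn_fundDom (hΦ.continuous.comp (continuous_const.prodMk continuous_id)))
    ((hΦ'c.comp (continuous_const.prodMk continuous_id)).aestronglyMeasurable)
    ?bnd ?bint ?hdiff
  · exact key.2
  case bnd =>
    refine (MeasureTheory.ae_restrict_iff' measurableSet_fundDom).2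
      (Filter.Eventually.of_forall fun x hx s hs => ?_)
    refine hC (s, x) ⟨?_, fundDom_subset_compact hx⟩
    rw [Metric.mem_ball, Real.dist_eq, abs_lt] at hs
    exact ⟨by linarith [hs.1], by linarith [hs.2]⟩
  case bint =>
    exact MeasureTheory.integrableOn_const volume_fundDom_lt_top.ne
  case hdiff =>
    refine Filter.Eventually.of_forall fun x s _ => ?_
    exact hasDerivAt_slice Φ (hΦ.differentiable one_le_infty) s x

end Slice
lemma dv_sub {V : Type*} [NormedAddCommGroup V] [NormedSpace ℝ V]
    {f g : V → ℝ} {x : V} (hf : DifferentiableAt ℝ f x)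
    (hg : DifferentiableAt ℝ g x) (v : V) :
    fderiv ℝ (fun x => f x - g x) x v = fderiv ℝ f x v - fderiv ℝ g x v := by
  rw [fderiv_fun_sub hf hg]; simp

section Spatial
variable {d : ℕ}
local notation "E" => EuclideanSpace ℝ (Fin d)

noncomputable def hvv (u : EuclideanSpace ℝ (Fin d) → ℝ) (x : EuclideanSpace ℝ (Fin d)) : ℝ :=
  ∑ i, ∑ j, pder i u x * pder j u x * pder i (pder j u) x

variable {u : EuclideanSpace ℝ (Fin d) → ℝ} (hu : ContDiff ℝ (⊤:ℕ∞) u)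
  (hupos : ∀ x, 0 < u x)

section Smooth
include hu

lemma smooth_pd (j : Fin d) : ContDiff ℝ (⊤:ℕ∞) (pder j u) := contDiff_pder hu j

lemma smooth_pd2 (i j : Fin d) : ContDiff ℝ (⊤:ℕ∞) (pder i (pder j u)) :=
  contDiff_pder (smooth_pd hu j) i

lemma smooth_gradSq : ContDiff ℝ (⊤:ℕ∞) (gradSq u) := by
  have : gradSq u = fun x => ∑ i, (pder i u x) ^ 2 := rfl
  rw [this]
  exact ContDiff.sum fun i _ => (smooth_pd hu i).pow 2

lemma smooth_lap : ContDiff ℝ (⊤:ℕ∞) (lap u) := by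
  have : lap u = fun x => ∑ i, pder i (pder i u) x := rfl
  rw [this]
  exact ContDiff.sum fun i _ => smooth_pd2 hu i i

lemma smooth_hessSq : ContDiff ℝ (⊤:ℕ∞) (hessSq u) := by
  have : hessSq u = fun x => ∑ i, ∑ j, (pder i (pder j u) x) ^ 2 := rfl
  rw [this]
  exact ContDiff.sum fun i _ => ContDiff.sum fun j _ => (smooth_pd2 hu i j).pow 2

lemma smooth_hvv : ContDiff ℝ (⊤:ℕ∞) (hvv u) := by
  have : hvv u = fun x => ∑ i, ∑ j, pder i u x * pder j u x * pder i (pder j u) x := rfl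
  rw [this]
  exact ContDiff.sum fun i _ => ContDiff.sum fun j _ =>
    ((smooth_pd hu i).mul (smooth_pd hu j)).mul (smooth_pd2 hu i j)

include hupos in
lemma smooth_rpow (m : ℝ) : ContDiff ℝ (⊤:ℕ∞) (fun x => u x ^ m) :=
  contDiff_iff_contDiffAt.2 fun x => (hu.contDiffAt).rpow_const_of_ne (hupos x).ne'

end Smooth

lemma pder_gradSq_eq (hu : ContDiff ℝ (⊤:ℕ∞) u) (i : Fin d) (x : EuclideanSpace ℝ (Fin d)) :
    pder i (gradSq u) x = ∑ j, 2 * pder j u x * pder i (pder j u) x := by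
  have h1 : pder i (fun y => ∑ j, (pder j u y)^2) x = ∑ j, pder i (fun y => (pder j u y)^2) x :=
    pder_sum _ (fun j _ => ((smooth_pd hu j).pow 2).differentiable one_le_infty x) i
  have h2 : ∀ j : Fin d, pder i (fun y => (pder j u y)^2) x
      = 2 * pder j u x * pder i (pder j u) x := fun j =>
    pder_sq ((smooth_pd hu j).differentiable one_le_infty x) i
  exact h1.trans (Finset.sum_congr rfl fun j _ => h2 j)

include hu hupos in
lemma div1 (m : ℝ) (x : EuclideanSpace ℝ (Fin d)) :
    ∑ i, pder i (fun y => u y ^ m * gradSq u y * pder i u y) x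
      = m * u x ^ (m-1) * gradSq u x ^ 2
        + 2 * u x ^ m * hvv u x
        + u x ^ m * gradSq u x * lap u x := by
  have dupow : ∀ y, DifferentiableAt ℝ (fun z => u z ^ m) y :=
    fun y => (smooth_rpow hu hupos m).differentiable one_le_infty y
  have dgs : ∀ y, DifferentiableAt ℝ (gradSq u) y :=
    fun y => (smooth_gradSq hu).differentiable one_le_infty y
  have dpd : ∀ (j : Fin d) y, DifferentiableAt ℝ (pder j u) y :=
    fun j y => (smooth_pd hu j).differentiable one_le_infty y
  have du : ∀ y, DifferentiableAt ℝ u y := fun y => hu.differentiable one_le_infty y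
  have step1 : ∀ i : Fin d, pder i (fun y => u y ^ m * gradSq u y * pder i u y) x
      = m * u x ^ (m-1) * pder i u x ^ 2 * gradSq u x
        + 2 * u x ^ m * (∑ j, pder i u x * pder j u x * pder i (pder j u) x)
        + u x ^ m * gradSq u x * pder i (pder i u) x := by
    intro i
    have e1 : pder i (fun y => (u y ^ m * gradSq u y) * pder i u y) x
        = (u x ^ m * gradSq u x) * pder i (pder i u) x
          + pder i u x * pder i (fun y => u y ^ m * gradSq u y) x :=
      pder_mul ((dupow x).mul (dgs x)) (dpd i x) i
    have e2 : pder i (fun y => u y ^ m * gradSq u y) x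
        = u x ^ m * pder i (gradSq u) x + gradSq u x * pder i (fun y => u y ^ m) x :=
      pder_mul (dupow x) (dgs x) i
    have e3 : pder i (fun y => u y ^ m) x = m * u x ^ (m-1) * pder i u x :=
      pder_rpow (du x) (hupos x) m i
    have e4 := pder_gradSq_eq hu i x
    have hsum : pder i u x * (u x ^ m * (∑ j, 2 * pder j u x * pder i (pder j u) x))
        = 2 * u x ^ m * (∑ j, pder i u x * pder j u x * pder i (pder j u) x) := by
      rw [Finset.mul_sum, Finset.mul_sum, Finset.mul_sum]
      exact Finset.sum_congr rfl fun j _ => by ring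
    rw [e1, e2, e3, e4]
    linear_combination hsum
  rw [Finset.sum_congr rfl fun i _ => step1 i]
  rw [Finset.sum_add_distrib, Finset.sum_add_distrib]
  have t1 : ∑ i : Fin d, m * u x ^ (m-1) * pder i u x ^ 2 * gradSq u x
      = m * u x ^ (m-1) * gradSq u x ^ 2 := by
    rw [← Finset.sum_mul, ← Finset.mul_sum]
    have : ∑ i : Fin d, pder i u x ^ 2 = gradSq u x := rfl
    rw [this]; ring
  have t2 : ∑ i : Fin d, 2 * u x ^ m * (∑ j, pder i u x * pder j u x * pder i (pder j u) x)
      = 2 * u x ^ m * hvv u x := by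
    rw [← Finset.mul_sum]; rfl
  have t3 : ∑ i : Fin d, u x ^ m * gradSq u x * pder i (pder i u) x
      = u x ^ m * gradSq u x * lap u x := by
    rw [← Finset.mul_sum]; rfl
  rw [t1, t2, t3]

end Spatial
section Spatial2
variable {d : ℕ}
variable {u : EuclideanSpace ℝ (Fin d) → ℝ} (hu : ContDiff ℝ (⊤:ℕ∞) u)
  (hupos : ∀ x, 0 < u x)

lemma pder_const (c : ℝ) (i : Fin d) (x : EuclideanSpace ℝ (Fin d)) :
    pder i (fun _ => c) x = 0 := by
  unfold pder; rw [fderiv_const_apply]; simp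

lemma pder_sub {f g : EuclideanSpace ℝ (Fin d) → ℝ} {x : EuclideanSpace ℝ (Fin d)}
    (hf : DifferentiableAt ℝ f x) (hg : DifferentiableAt ℝ g x) (i : Fin d) :
    pder i (fun x => f x - g x) x = pder i f x - pder i g x := dv_sub hf hg _

lemma pder_lap_eq (hu : ContDiff ℝ (⊤:ℕ∞) u) (i : Fin d) (x : EuclideanSpace ℝ (Fin d)) :
    pder i (lap u) x = ∑ j, pder i (pder j (pder j u)) x := by
  have h1 : pder i (fun y => ∑ j, pder j (pder j u) y) x
      = ∑ j, pder i (pder j (pder j u)) x :=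
    pder_sum _ (fun j _ => (smooth_pd2 hu j j).differentiable one_le_infty x) i
  exact h1

include hu hupos in
lemma div3 (w : EuclideanSpace ℝ (Fin d) → ℝ) (hw : ContDiff ℝ (⊤:ℕ∞) w) (m : ℝ)
    (x : EuclideanSpace ℝ (Fin d)) :
    ∑ i, pder i (fun y => 2 * u y ^ m * w y * pder i u y) x
      = 2 * m * u x ^ (m-1) * w x * gradSq u x
        + 2 * u x ^ m * (∑ i, pder i u x * pder i w x)
        + 2 * u x ^ m * w x * lap u x := by
  have dupow : ∀ y, DifferentiableAt ℝ (fun z => u z ^ m) y :=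
    fun y => (smooth_rpow hu hupos m).differentiable one_le_infty y
  have d2upow : ∀ y, DifferentiableAt ℝ (fun z => 2 * u z ^ m) y :=
    fun y => (differentiableAt_const 2).mul (dupow y)
  have dw : ∀ y, DifferentiableAt ℝ w y := fun y => hw.differentiable one_le_infty y
  have dpd : ∀ (j : Fin d) y, DifferentiableAt ℝ (pder j u) y :=
    fun j y => (smooth_pd hu j).differentiable one_le_infty y
  have du : ∀ y, DifferentiableAt ℝ u y := fun y => hu.differentiable one_le_infty y
  have step1 : ∀ i : Fin d, pder i (fun y => 2 * u y ^ m * w y * pder i u y) x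
      = 2 * m * u x ^ (m-1) * w x * pder i u x ^ 2
        + 2 * u x ^ m * (pder i u x * pder i w x)
        + 2 * u x ^ m * w x * pder i (pder i u) x := by
    intro i
    have e1 : pder i (fun y => (2 * u y ^ m * w y) * pder i u y) x
        = (2 * u x ^ m * w x) * pder i (pder i u) x
          + pder i u x * pder i (fun y => 2 * u y ^ m * w y) x :=
      pder_mul ((d2upow x).mul (dw x)) (dpd i x) i
    have e2 : pder i (fun y => (2 * u y ^ m) * w y) x
        = (2 * u x ^ m) * pder i w x + w x * pder i (fun y => 2 * u y ^ m) x :=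
      pder_mul (d2upow x) (dw x) i
    have e3 : pder i (fun y => (2:ℝ) * u y ^ m) x
        = 2 * pder i (fun y => u y ^ m) x + u x ^ m * pder i (fun _ => (2:ℝ)) x :=
      pder_mul (differentiableAt_const 2) (dupow x) i
    have e4 : pder i (fun y => u y ^ m) x = m * u x ^ (m-1) * pder i u x :=
      pder_rpow (du x) (hupos x) m i
    rw [e1, e2, e3, e4, pder_const]
    ring
  rw [Finset.sum_congr rfl fun i _ => step1 i]
  rw [Finset.sum_add_distrib, Finset.sum_add_distrib]
  have t1 : ∑ i : Fin d, 2 * m * u x ^ (m-1) * w x * pder i u x ^ 2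
      = 2 * m * u x ^ (m-1) * w x * gradSq u x := by
    rw [← Finset.mul_sum]; rfl
  have t2 : ∑ i : Fin d, 2 * u x ^ m * (pder i u x * pder i w x)
      = 2 * u x ^ m * (∑ i, pder i u x * pder i w x) := by
    rw [← Finset.mul_sum]
  have t3 : ∑ i : Fin d, 2 * u x ^ m * w x * pder i (pder i u) x
      = 2 * u x ^ m * w x * lap u x := by
    rw [← Finset.mul_sum]; rfl
  rw [t1, t2, t3]

include hu hupos in
lemma div2 (m : ℝ) (x : EuclideanSpace ℝ (Fin d)) :
    ∑ i, pder i (fun y => u y ^ (m+1) *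
        (pder i u y * lap u y - ∑ j, pder j u y * pder i (pder j u) y)) x
      = (m+1) * u x ^ m * (gradSq u x * lap u x - hvv u x)
        + u x ^ (m+1) * (lap u x ^ 2 - hessSq u x) := by
  have dupow : ∀ y, DifferentiableAt ℝ (fun z => u z ^ (m+1)) y :=
    fun y => (smooth_rpow hu hupos (m+1)).differentiable one_le_infty y
  have dpd : ∀ (j : Fin d) y, DifferentiableAt ℝ (pder j u) y :=
    fun j y => (smooth_pd hu j).differentiable one_le_infty y
  have dpd2 : ∀ (i j : Fin d) y, DifferentiableAt ℝ (pder i (pder j u)) y :=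
    fun i j y => (smooth_pd2 hu i j).differentiable one_le_infty y
  have dlap : ∀ y, DifferentiableAt ℝ (lap u) y :=
    fun y => (smooth_lap hu).differentiable one_le_infty y
  have du : ∀ y, DifferentiableAt ℝ u y := fun y => hu.differentiable one_le_infty y
  have dB : ∀ (i : Fin d) y, DifferentiableAt ℝ
      (fun z => ∑ j, pder j u z * pder i (pder j u) z) y := by
    intro i y
    exact DifferentiableAt.fun_sum fun j _ => (dpd j y).mul (dpd2 i j y)
  have step1 : ∀ i : Fin d, pder i (fun y => u y ^ (m+1) *
        (pder i u y * lap u y - ∑ j, pder j u y * pder i (pder j u) y)) x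
      = u x ^ (m+1) * (pder i u x * (∑ j, pder i (pder j (pder j u)) x)
            + lap u x * pder i (pder i u) x
            - ∑ j, (pder j u x * pder i (pder i (pder j u)) x
                + pder i (pder j u) x * pder i (pder j u) x))
        + (m+1) * u x ^ m * pder i u x *
            (pder i u x * lap u x - ∑ j, pder j u x * pder i (pder j u) x) := by
    intro i
    have e1 : pder i (fun y => u y ^ (m+1) *
          (pder i u y * lap u y - ∑ j, pder j u y * pder i (pder j u) y)) x
        = u x ^ (m+1) * pder i (fun y =>
            pder i u y * lap u y - ∑ j, pder j u y * pder i (pder j u) y) x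
          + (pder i u x * lap u x - ∑ j, pder j u x * pder i (pder j u) x)
            * pder i (fun y => u y ^ (m+1)) x :=
      pder_mul (dupow x) (((dpd i x).mul (dlap x)).sub (dB i x)) i
    have e2 : pder i (fun y =>
          (pder i u y * lap u y) - (∑ j, pder j u y * pder i (pder j u) y)) x
        = pder i (fun y => pder i u y * lap u y) x
          - pder i (fun y => ∑ j, pder j u y * pder i (pder j u) y) x :=
      pder_sub ((dpd i x).mul (dlap x)) (dB i x) i
    have e3 : pder i (fun y => pder i u y * lap u y) x
        = pder i u x * pder i (lap u) x + lap u x * pder i (pder i u) x :=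
      pder_mul (dpd i x) (dlap x) i
    have e4 : pder i (fun y => ∑ j, pder j u y * pder i (pder j u) y) x
        = ∑ j, (pder j u x * pder i (pder i (pder j u)) x
            + pder i (pder j u) x * pder i (pder j u) x) := by
      have h1 : pder i (fun y => ∑ j, pder j u y * pder i (pder j u) y) x
          = ∑ j, pder i (fun y => pder j u y * pder i (pder j u) y) x :=
        pder_sum _ (fun j _ => (dpd j x).mul (dpd2 i j x)) i
      rw [h1]
      refine Finset.sum_congr rfl fun j _ => ?_
      exact pder_mul (dpd j x) (dpd2 i j x) i
    have e5 : pder i (fun y => u y ^ (m+1)) x = (m+1) * u x ^ m * pder i u x := by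
      have := pder_rpow (du x) (hupos x) (m+1) i
      rwa [show m + 1 - 1 = m by ring] at this
    rw [e1, e2, e3, e4, e5, pder_lap_eq hu]
    ring
  rw [Finset.sum_congr rfl fun i _ => step1 i]
  rw [Finset.sum_add_distrib]
  have hq : ∀ i j : Fin d, pder i (pder j u) = pder j (pder i u) :=
    fun i j => funext (pder_comm hu i j)
  have h3 : ∀ i j : Fin d, pder i (pder j (pder j u)) x = pder j (pder j (pder i u)) x := by
    intro i j
    calc pder i (pder j (pder j u)) x
        = pder j (pder i (pder j u)) x := pder_comm (smooth_pd hu j) i j x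
      _ = pder j (pder j (pder i u)) x := by rw [hq i j]
  have hcancel : ∑ i : Fin d, ∑ j, pder i u x * pder i (pder j (pder j u)) x
      = ∑ i : Fin d, ∑ j, pder j u x * pder i (pder i (pder j u)) x := by
    conv_rhs => rw [Finset.sum_comm]
    refine Finset.sum_congr rfl fun i _ => Finset.sum_congr rfl fun j _ => ?_
    rw [h3 i j]
  have a1 : ∑ i : Fin d, pder i u x * (∑ j, pder i (pder j (pder j u)) x)
      = ∑ i : Fin d, ∑ j, pder i u x * pder i (pder j (pder j u)) x :=
    Finset.sum_congr rfl fun i _ => Finset.mul_sum _ _ _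
  have a2 : ∑ i : Fin d, ∑ j, (pder j u x * pder i (pder i (pder j u)) x
        + pder i (pder j u) x * pder i (pder j u) x)
      = (∑ i : Fin d, ∑ j, pder j u x * pder i (pder i (pder j u)) x) + hessSq u x := by
    rw [Finset.sum_congr rfl fun i (_ : i ∈ Finset.univ) => Finset.sum_add_distrib,
      Finset.sum_add_distrib]
    congr 1
    refine Finset.sum_congr rfl fun i _ => Finset.sum_congr rfl fun j _ => ?_
    exact (pow_two _).symm
  have T1 : ∑ i : Fin d, u x ^ (m+1) * (pder i u x * (∑ j, pder i (pder j (pder j u)) x)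
            + lap u x * pder i (pder i u) x
            - ∑ j, (pder j u x * pder i (pder i (pder j u)) x
                + pder i (pder j u) x * pder i (pder j u) x))
      = u x ^ (m+1) * (lap u x ^ 2 - hessSq u x) := by
    rw [← Finset.mul_sum]
    congr 1
    rw [Finset.sum_sub_distrib, Finset.sum_add_distrib, a1, a2, hcancel]
    have b1 : ∑ i : Fin d, lap u x * pder i (pder i u) x = lap u x ^ 2 := by
      rw [← Finset.mul_sum]
      have : ∑ i : Fin d, pder i (pder i u) x = lap u x := rfl
      rw [this]; ring
    rw [b1]; ring
  have T2 : ∑ i : Fin d, (m+1) * u x ^ m * pder i u x *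
        (pder i u x * lap u x - ∑ j, pder j u x * pder i (pder j u) x)
      = (m+1) * u x ^ m * (gradSq u x * lap u x - hvv u x) := by
    have c1 : ∀ i : Fin d, (m+1) * u x ^ m * pder i u x *
          (pder i u x * lap u x - ∑ j, pder j u x * pder i (pder j u) x)
        = (m+1) * u x ^ m * (pder i u x ^ 2 * lap u x
            - ∑ j, pder i u x * pder j u x * pder i (pder j u) x) := by
      intro i
      have hps : pder i u x * ∑ j, pder j u x * pder i (pder j u) x
          = ∑ j, pder i u x * pder j u x * pder i (pder j u) x := by
        rw [Finset.mul_sum]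
        exact Finset.sum_congr rfl fun j _ => by ring
      linear_combination (-(m+1) * u x ^ m) * hps
    rw [Finset.sum_congr rfl fun i _ => c1 i, ← Finset.mul_sum]
    congr 1
    rw [Finset.sum_sub_distrib, ← Finset.sum_mul]
    have hg : (∑ i : Fin d, pder i u x ^ 2) = gradSq u x := rfl
    rw [hg]
    rfl
  rw [T1, T2]; ring
end Spatial2
section Periodic
variable {d : ℕ} {f g : EuclideanSpace ℝ (Fin d) → ℝ}

lemma ZPeriodic.mul (hf : ZPeriodic f) (hg : ZPeriodic g) :
    ZPeriodic (fun x => f x * g x) := fun x k => by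
  simp only [hf x k, hg x k]

lemma ZPeriodic.add (hf : ZPeriodic f) (hg : ZPeriodic g) :
    ZPeriodic (fun x => f x + g x) := fun x k => by
  simp only [hf x k, hg x k]

lemma ZPeriodic.sub (hf : ZPeriodic f) (hg : ZPeriodic g) :
    ZPeriodic (fun x => f x - g x) := fun x k => by
  simp only [hf x k, hg x k]

lemma ZPeriodic.rpow (hf : ZPeriodic f) (m : ℝ) :
    ZPeriodic (fun x => f x ^ m) := fun x k => by
  simp only [hf x k]

lemma ZPeriodic.pow (hf : ZPeriodic f) (n : ℕ) :
    ZPeriodic (fun x => f x ^ n) := fun x k => by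
  simp only [hf x k]

lemma ZPeriodic.constMul (hf : ZPeriodic f) (c : ℝ) :
    ZPeriodic (fun x => c * f x) := fun x k => by
  simp only [hf x k]

lemma ZPeriodic.sum {ι : Type*} {s : Finset ι} {F : ι → EuclideanSpace ℝ (Fin d) → ℝ}
    (hF : ∀ i ∈ s, ZPeriodic (F i)) :
    ZPeriodic (fun x => ∑ i ∈ s, F i x) := fun x k => by
  exact Finset.sum_congr rfl fun i hi => hF i hi x k

variable {u : EuclideanSpace ℝ (Fin d) → ℝ} (hu : ContDiff ℝ (⊤:ℕ∞) u)
  (huper : ZPeriodic u)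
include hu huper

lemma zper_pd (i : Fin d) : ZPeriodic (pder i u) :=
  zperiodic_pder (hu.differentiable one_le_infty) huper i

lemma zper_pd2 (i j : Fin d) : ZPeriodic (pder i (pder j u)) :=
  zperiodic_pder ((smooth_pd hu j).differentiable one_le_infty)
    (zper_pd hu huper j) i

lemma zper_gradSq : ZPeriodic (gradSq u) :=
  ZPeriodic.sum fun i _ => (zper_pd hu huper i).pow 2

lemma zper_lap : ZPeriodic (lap u) :=
  ZPeriodic.sum fun i _ => zper_pd2 hu huper i i

lemma zper_hessSq : ZPeriodic (hessSq u) :=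
  ZPeriodic.sum fun i _ => ZPeriodic.sum fun j _ => (zper_pd2 hu huper i j).pow 2

lemma zper_hvv : ZPeriodic (hvv u) :=
  ZPeriodic.sum fun i _ => ZPeriodic.sum fun j _ =>
    ((zper_pd hu huper i).mul (zper_pd hu huper j)).mul (zper_pd2 hu huper i j)

end Periodic
lemma pointwise5 {m a P g S H D um um1 : ℝ} (hm : 0 < m) (hP : 0 ≤ P)
    (hg : 0 ≤ g) (hS : 0 ≤ S) (hcs : H^2 ≤ S * g^2)
    (hum : um = P * a) (hum1 : um1 = P * a * a) :
    (-6*m) * (um*g*D) + (-12*m) * (um*H)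
      ≤ 9*(um1*D^2) + 3*m^2*(P*g^2) + 18*(um1*S) := by
  subst hum hum1
  have key : 0 ≤ 9*a^2*D^2 + 3*m^2*g^2 + 18*a^2*S + 6*m*a*D*g + 12*m*a*H := by
    rcases eq_or_lt_of_le hg with hg0 | hgpos
    · have hH : H = 0 := by
        have : H^2 ≤ 0 := by rw [← hg0] at hcs; nlinarith [hcs]
        nlinarith [sq_nonneg H]
      rw [← hg0, hH]
      nlinarith [sq_nonneg (a*D), mul_nonneg (sq_nonneg a) hS]
    · have hCg : 0 ≤ 2*m^2*g^2 + 18*a^2*S + 12*m*a*H := by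
        nlinarith [sq_nonneg (3*a*H + m*g^2), hcs, mul_pos hgpos hgpos, sq_nonneg a,
          mul_nonneg (sq_nonneg a) (sub_nonneg.2 hcs)]
      nlinarith [hCg, sq_nonneg (3*a*D + m*g)]
  rw [← sub_nonneg,
    show 9*(P*a*a*D^2) + 3*m^2*(P*g^2) + 18*(P*a*a*S)
        - ((-6*m) * ((P*a)*g*D) + (-12*m) * ((P*a)*H))
      = P * (9*a^2*D^2 + 3*m^2*g^2 + 18*a^2*S + 6*m*a*D*g + 12*m*a*H) from by ring]
  exact mul_nonneg hP key

section CS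
variable {d : ℕ}

lemma gradSq_nonneg (u : EuclideanSpace ℝ (Fin d) → ℝ) (x : EuclideanSpace ℝ (Fin d)) :
    0 ≤ gradSq u x := Finset.sum_nonneg fun i _ => sq_nonneg _

lemma hessSq_nonneg (u : EuclideanSpace ℝ (Fin d) → ℝ) (x : EuclideanSpace ℝ (Fin d)) :
    0 ≤ hessSq u x := Finset.sum_nonneg fun i _ => Finset.sum_nonneg fun j _ => sq_nonneg _

lemma hvv_cs (u : EuclideanSpace ℝ (Fin d) → ℝ) (x : EuclideanSpace ℝ (Fin d)) :
    hvv u x ^ 2 ≤ hessSq u x * gradSq u x ^ 2 := by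
  have h1 : hvv u x = ∑ z ∈ (Finset.univ ×ˢ Finset.univ : Finset (Fin d × Fin d)),
      (pder z.1 u x * pder z.2 u x) * (pder z.1 (pder z.2 u) x) := by
    rw [Finset.sum_product]; rfl
  have h2 : ∑ z ∈ (Finset.univ ×ˢ Finset.univ : Finset (Fin d × Fin d)),
      (pder z.1 u x * pder z.2 u x) ^ 2 = gradSq u x ^ 2 := by
    rw [Finset.sum_product]
    have : ∀ i : Fin d, ∑ j : Fin d, (pder i u x * pder j u x)^2
        = pder i u x ^ 2 * gradSq u x := by
      intro i
      show ∑ j : Fin d, (pder i u x * pder j u x)^2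
          = pder i u x ^ 2 * ∑ j : Fin d, pder j u x ^ 2
      rw [Finset.mul_sum]
      exact Finset.sum_congr rfl fun j _ => by ring
    rw [Finset.sum_congr rfl fun i _ => this i, ← Finset.sum_mul]
    have hg : (∑ i : Fin d, pder i u x ^ 2) = gradSq u x := rfl
    rw [hg]; ring
  have h3 : ∑ z ∈ (Finset.univ ×ˢ Finset.univ : Finset (Fin d × Fin d)),
      (pder z.1 (pder z.2 u) x) ^ 2 = hessSq u x := by
    rw [Finset.sum_product]; rfl
  have := Finset.sum_mul_sq_le_sq_mul_sq
    (Finset.univ ×ˢ Finset.univ : Finset (Fin d × Fin d))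
    (fun z => pder z.1 u x * pder z.2 u x) (fun z => pder z.1 (pder z.2 u) x)
  rw [h2, h3] at this
  rw [h1, mul_comm (hessSq u x)]
  exact this

end CS
section SpatialMain
variable {d : ℕ}

noncomputable def wfun (u : EuclideanSpace ℝ (Fin d) → ℝ) (x : EuclideanSpace ℝ (Fin d)) : ℝ :=
  gradSq u x + u x * lap u x

theorem spatial_main (hd : 1 ≤ d) {u : EuclideanSpace ℝ (Fin d) → ℝ}
    (hu : ContDiff ℝ (⊤:ℕ∞) u) (huper : ZPeriodic u) (hupos : ∀ x, 0 < u x)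
    {m : ℝ} (hm : 0 ≤ m) :
    (∫ x in fundDom d, (m * u x ^ (m-1) * wfun u x * gradSq u x
        + 2 * u x ^ m * ∑ i, pder i u x * pder i (wfun u) x))
      + (m / (m+1)) * (∫ x in fundDom d, u x ^ (m+1) * lap u x ^ 2)
      + (((m+2)/(m+1)) * ((m+3)^2/36) - (m^2 - m + 2)/4) *
          (∫ x in fundDom d, u x ^ (m-1) * gradSq u x ^ 2)
      ≤ 0 := by
  have hm1 : (0:ℝ) < m + 1 := by linarith
  have hm2 : (0:ℝ) < m + 2 := by linarith
  -- continuity facts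
  have cpow : ∀ a : ℝ, Continuous fun x => u x ^ a :=
    fun a => (smooth_rpow hu hupos a).continuous
  have cg : Continuous (gradSq u) := (smooth_gradSq hu).continuous
  have clap : Continuous (lap u) := (smooth_lap hu).continuous
  have chess : Continuous (hessSq u) := (smooth_hessSq hu).continuous
  have chvv : Continuous (hvv u) := (smooth_hvv hu).continuous
  have hwsm : ContDiff ℝ (⊤:ℕ∞) (wfun u) := by
    have hwe : wfun u = fun x => gradSq u x + u x * lap u x := rfl
    rw [hwe]; exact (smooth_gradSq hu).add (hu.mul (smooth_lap hu))
  have hwper : ZPeriodic (wfun u) :=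
    (zper_gradSq hu huper).add (huper.mul (zper_lap hu huper))
  have cw : Continuous (wfun u) := hwsm.continuous
  have cpd : ∀ i : Fin d, Continuous (pder i u) := fun i => (smooth_pd hu i).continuous
  have cpdw : ∀ i : Fin d, Continuous (pder i (wfun u)) :=
    fun i => (contDiff_pder hwsm i).continuous
  have csumw : Continuous fun x => ∑ i, pder i u x * pder i (wfun u) x :=
    continuous_finset_sum _ fun i _ => (cpd i).mul (cpdw i)
  -- base integrals
  set I1 : ℝ := ∫ x in fundDom d, u x ^ m * gradSq u x * lap u x with hI1def
  set I2 : ℝ := ∫ x in fundDom d, u x ^ (m-1) * gradSq u x ^ 2 with hI2def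
  set I3 : ℝ := ∫ x in fundDom d, u x ^ (m+1) * lap u x ^ 2 with hI3def
  set Jv : ℝ := ∫ x in fundDom d, u x ^ m * hvv u x with hJdef
  set Kv : ℝ := ∫ x in fundDom d, u x ^ (m+1) * hessSq u x with hKdef
  set E' : ℝ := ∫ x in fundDom d, (m * u x ^ (m-1) * wfun u x * gradSq u x
      + 2 * u x ^ m * ∑ i, pder i u x * pder i (wfun u) x) with hEdef
  -- integrability of the base integrands
  have intI1 : MeasureTheory.IntegrableOn
      (fun x => u x ^ m * gradSq u x * lap u x) (fundDom d) :=
    integrableOn_fundDom (((cpow m).mul cg).mul clap)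
  have intI2 : MeasureTheory.IntegrableOn
      (fun x => u x ^ (m-1) * gradSq u x ^ 2) (fundDom d) :=
    integrableOn_fundDom ((cpow (m-1)).mul (cg.pow 2))
  have intI3 : MeasureTheory.IntegrableOn
      (fun x => u x ^ (m+1) * lap u x ^ 2) (fundDom d) :=
    integrableOn_fundDom ((cpow (m+1)).mul (clap.pow 2))
  have intJ : MeasureTheory.IntegrableOn
      (fun x => u x ^ m * hvv u x) (fundDom d) :=
    integrableOn_fundDom ((cpow m).mul chvv)
  have intK : MeasureTheory.IntegrableOn
      (fun x => u x ^ (m+1) * hessSq u x) (fundDom d) :=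
    integrableOn_fundDom ((cpow (m+1)).mul chess)
  -- rpow collapsing
  have hcol1 : ∀ x, u x ^ (m-1) * u x = u x ^ m := by
    intro x
    rw [show m = (m-1)+1 by ring, Real.rpow_add_one (hupos x).ne']
    ring_nf
  have hcol2 : ∀ x, u x ^ m * u x = u x ^ (m+1) := fun x =>
    (Real.rpow_add_one (hupos x).ne' m).symm
  -- Identity R1
  have hdiv1 := torus_div hd (fun i y => u y ^ m * gradSq u y * pder i u y)
    (fun i => ((smooth_rpow hu hupos m).mul (smooth_gradSq hu)).mul (smooth_pd hu i))
    (fun i => ((huper.rpow m).mul (zper_gradSq hu huper)).mul (zper_pd hu huper i))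
  have hAsum : ∫ x in fundDom d, (m * (u x ^ (m-1) * gradSq u x ^ 2)
        + (2 * (u x ^ m * hvv u x) + u x ^ m * gradSq u x * lap u x))
      = m * I2 + (2 * Jv + I1) := by
    rw [MeasureTheory.integral_add
        (integrableOn_fundDom (continuous_const.fun_mul ((cpow (m-1)).fun_mul (cg.fun_pow 2))))
        (integrableOn_fundDom ((continuous_const.fun_mul ((cpow m).fun_mul chvv)).fun_add
          (((cpow m).fun_mul cg).fun_mul clap))),
      MeasureTheory.integral_add
        (integrableOn_fundDom (continuous_const.fun_mul ((cpow m).fun_mul chvv))) intI1,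
      MeasureTheory.integral_const_mul, MeasureTheory.integral_const_mul]
  have hA : m * I2 + (2 * Jv + I1) = 0 := by
    rw [← hAsum, ← hdiv1]
    refine MeasureTheory.setIntegral_congr_fun measurableSet_fundDom fun x _ => ?_
    rw [div1 hu hupos m x]
    ring
  -- Identity R2
  have hdiv2 := torus_div hd (fun i y => u y ^ (m+1) *
      (pder i u y * lap u y - ∑ j, pder j u y * pder i (pder j u) y))
    (fun i => (smooth_rpow hu hupos (m+1)).mul
      (((smooth_pd hu i).mul (smooth_lap hu)).sub
        (ContDiff.sum fun j _ => (smooth_pd hu j).mul (smooth_pd2 hu i j))))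
    (fun i => (huper.rpow (m+1)).mul
      (((zper_pd hu huper i).mul (zper_lap hu huper)).sub
        (ZPeriodic.sum fun j _ => (zper_pd hu huper j).mul (zper_pd2 hu huper i j))))
  have hBsum : ∫ x in fundDom d, ((m+1) * (u x ^ m * gradSq u x * lap u x
          - u x ^ m * hvv u x)
        + (u x ^ (m+1) * lap u x ^ 2 - u x ^ (m+1) * hessSq u x))
      = (m+1) * (I1 - Jv) + (I3 - Kv) := by
    rw [MeasureTheory.integral_add
        (integrableOn_fundDom (continuous_const.fun_mul ((((cpow m).fun_mul cg).fun_mul clap).fun_sub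
          ((cpow m).fun_mul chvv))))
        (integrableOn_fundDom (((cpow (m+1)).fun_mul (clap.fun_pow 2)).fun_sub
          ((cpow (m+1)).fun_mul chess))),
      MeasureTheory.integral_const_mul, MeasureTheory.integral_sub intI1 intJ,
      MeasureTheory.integral_sub intI3 intK]
  have hB : (m+1) * (I1 - Jv) + (I3 - Kv) = 0 := by
    rw [← hBsum, ← hdiv2]
    refine MeasureTheory.setIntegral_congr_fun measurableSet_fundDom fun x _ => ?_
    rw [div2 hu hupos m x]
    ring
  -- Identity R3
  have hdiv3 := torus_div hd (fun i y => 2 * u y ^ m * wfun u y * pder i u y)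
    (fun i => ((contDiff_const.mul (smooth_rpow hu hupos m)).mul hwsm).mul (smooth_pd hu i))
    (fun i => (((huper.rpow m).constMul 2).mul hwper).mul (zper_pd hu huper i))
  have intE1 : MeasureTheory.IntegrableOn
      (fun x => m * u x ^ (m-1) * wfun u x * gradSq u x
        + 2 * u x ^ m * ∑ i, pder i u x * pder i (wfun u) x) (fundDom d) :=
    integrableOn_fundDom ((((continuous_const.mul (cpow (m-1))).mul cw).mul cg).add
      ((continuous_const.mul (cpow m)).mul csumw))
  have intE2 : MeasureTheory.IntegrableOn
      (fun x => m * u x ^ (m-1) * wfun u x * gradSq u x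
        + 2 * u x ^ m * wfun u x * lap u x) (fundDom d) :=
    integrableOn_fundDom ((((continuous_const.mul (cpow (m-1))).mul cw).mul cg).add
      (((continuous_const.mul (cpow m)).mul cw).mul clap))
  have hC : E' = -(m * I2 + ((m+2) * I1 + 2 * I3)) := by
    have hsplit : E' = (∫ x in fundDom d,
          (m * u x ^ (m-1) * wfun u x * gradSq u x
            + 2 * u x ^ m * (∑ i, pder i u x * pder i (wfun u) x)
            + (m * u x ^ (m-1) * wfun u x * gradSq u x
              + 2 * u x ^ m * wfun u x * lap u x)))
        - ∫ x in fundDom d, (m * u x ^ (m-1) * wfun u x * gradSq u x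
            + 2 * u x ^ m * wfun u x * lap u x) := by
      rw [MeasureTheory.integral_add intE1 intE2]
      simp [hEdef]
    have hzero : (∫ x in fundDom d,
          (m * u x ^ (m-1) * wfun u x * gradSq u x
            + 2 * u x ^ m * (∑ i, pder i u x * pder i (wfun u) x)
            + (m * u x ^ (m-1) * wfun u x * gradSq u x
              + 2 * u x ^ m * wfun u x * lap u x))) = 0 := by
      rw [← hdiv3]
      refine MeasureTheory.setIntegral_congr_fun measurableSet_fundDom fun x _ => ?_
      rw [div3 hu hupos (wfun u) hwsm m x]
      ring
    have hexpsum : ∫ x in fundDom d, (m * (u x ^ (m-1) * gradSq u x ^ 2)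
          + ((m+2) * (u x ^ m * gradSq u x * lap u x)
            + 2 * (u x ^ (m+1) * lap u x ^ 2)))
        = m * I2 + ((m+2) * I1 + 2 * I3) := by
      rw [MeasureTheory.integral_add
          (integrableOn_fundDom (continuous_const.fun_mul ((cpow (m-1)).fun_mul (cg.fun_pow 2))))
          (integrableOn_fundDom ((continuous_const.fun_mul (((cpow m).fun_mul cg).fun_mul clap)).fun_add
            (continuous_const.fun_mul ((cpow (m+1)).fun_mul (clap.fun_pow 2))))),
        MeasureTheory.integral_add
          (integrableOn_fundDom (continuous_const.fun_mul (((cpow m).fun_mul cg).fun_mul clap)))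
          (integrableOn_fundDom (continuous_const.fun_mul ((cpow (m+1)).fun_mul (clap.fun_pow 2)))),
        MeasureTheory.integral_const_mul, MeasureTheory.integral_const_mul,
        MeasureTheory.integral_const_mul]
    have hexp : (∫ x in fundDom d, (m * u x ^ (m-1) * wfun u x * gradSq u x
          + 2 * u x ^ m * wfun u x * lap u x))
        = m * I2 + ((m+2) * I1 + 2 * I3) := by
      rw [← hexpsum]
      refine MeasureTheory.setIntegral_congr_fun measurableSet_fundDom fun x _ => ?_
      have h1 := hcol1 x
      have h2 := hcol2 x
      show m * u x ^ (m-1) * wfun u x * gradSq u x + 2 * u x ^ m * wfun u x * lap u x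
        = m * (u x ^ (m-1) * gradSq u x ^ 2)
          + ((m+2) * (u x ^ m * gradSq u x * lap u x) + 2 * (u x ^ (m+1) * lap u x ^ 2))
      show m * u x ^ (m-1) * (gradSq u x + u x * lap u x) * gradSq u x
          + 2 * u x ^ m * (gradSq u x + u x * lap u x) * lap u x
        = m * (u x ^ (m-1) * gradSq u x ^ 2)
          + ((m+2) * (u x ^ m * gradSq u x * lap u x) + 2 * (u x ^ (m+1) * lap u x ^ 2))
      linear_combination (m * lap u x * gradSq u x) * h1 + (2 * lap u x ^ 2) * h2
    rw [hsplit, hzero, hexp]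
    ring
  -- nonnegativity
  have nI2 : 0 ≤ I2 := MeasureTheory.setIntegral_nonneg measurableSet_fundDom
    fun x _ => mul_nonneg (Real.rpow_nonneg (hupos x).le _) (sq_nonneg _)
  have nI3 : 0 ≤ I3 := MeasureTheory.setIntegral_nonneg measurableSet_fundDom
    fun x _ => mul_nonneg (Real.rpow_nonneg (hupos x).le _) (sq_nonneg _)
  have nK : 0 ≤ Kv := MeasureTheory.setIntegral_nonneg measurableSet_fundDom
    fun x _ => mul_nonneg (Real.rpow_nonneg (hupos x).le _) (hessSq_nonneg u x)
  -- R5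
  have hR5 : m^2 * I2 ≤ 3 * I3 + 6 * Kv := by
    rcases eq_or_lt_of_le hm with hm0 | hmpos
    · rw [← hm0]; norm_num; linarith
    · have hmono : (∫ x in fundDom d, ((-6*m) * (u x ^ m * gradSq u x * lap u x)
            + (-12*m) * (u x ^ m * hvv u x)))
          ≤ ∫ x in fundDom d, (9*(u x ^ (m+1) * lap u x ^2)
            + 3*m^2*(u x ^ (m-1) * gradSq u x ^2) + 18*(u x ^ (m+1) * hessSq u x)) := by
        refine MeasureTheory.setIntegral_mono_on
          (integrableOn_fundDom ((continuous_const.mul (((cpow m).mul cg).mul clap)).add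
            (continuous_const.mul ((cpow m).mul chvv))))
          (integrableOn_fundDom (((continuous_const.mul ((cpow (m+1)).mul (clap.pow 2))).add
            (continuous_const.mul ((cpow (m-1)).mul (cg.pow 2)))).add
            (continuous_const.mul ((cpow (m+1)).mul chess))))
          measurableSet_fundDom fun x _ => ?_
        exact pointwise5 hmpos (Real.rpow_nonneg (hupos x).le (m-1))
          (gradSq_nonneg u x) (hessSq_nonneg u x) (hvv_cs u x)
          (hcol1 x).symm (by rw [hcol1 x, hcol2 x])
      have hL : ∫ x in fundDom d, ((-6*m) * (u x ^ m * gradSq u x * lap u x)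
            + (-12*m) * (u x ^ m * hvv u x))
          = (-6*m) * I1 + (-12*m) * Jv := by
        rw [MeasureTheory.integral_add
            (integrableOn_fundDom (continuous_const.fun_mul (((cpow m).fun_mul cg).fun_mul clap)))
            (integrableOn_fundDom (continuous_const.fun_mul ((cpow m).fun_mul chvv))),
          MeasureTheory.integral_const_mul, MeasureTheory.integral_const_mul]
      have hR : ∫ x in fundDom d, (9*(u x ^ (m+1) * lap u x ^2)
            + 3*m^2*(u x ^ (m-1) * gradSq u x ^2) + 18*(u x ^ (m+1) * hessSq u x))
          = 9 * I3 + 3*m^2 * I2 + 18 * Kv := by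
        rw [MeasureTheory.integral_add
            (integrableOn_fundDom ((continuous_const.fun_mul ((cpow (m+1)).fun_mul (clap.fun_pow 2))).fun_add
              (continuous_const.fun_mul ((cpow (m-1)).fun_mul (cg.fun_pow 2)))))
            (integrableOn_fundDom (continuous_const.fun_mul ((cpow (m+1)).fun_mul chess))),
          MeasureTheory.integral_add
            (integrableOn_fundDom (continuous_const.fun_mul ((cpow (m+1)).fun_mul (clap.fun_pow 2))))
            (integrableOn_fundDom (continuous_const.fun_mul ((cpow (m-1)).fun_mul (cg.fun_pow 2)))),
          MeasureTheory.integral_const_mul, MeasureTheory.integral_const_mul,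
          MeasureTheory.integral_const_mul]
      rw [hL, hR] at hmono
      nlinarith [hmono, hA]
  -- final assembly
  have hI1eq : I1 = -(m*I2) - 2*Jv := by linarith
  have hKeq : Kv = (m+1)*((-(m*I2) - 2*Jv) - Jv) + I3 := by
    rw [← hI1eq]; linarith
  have hC2 : E' = -(m * I2 + ((m+2) * (-(m*I2) - 2*Jv) + 2 * I3)) := by
    rw [hC, hI1eq]
  have hR5' : m^2 * I2 ≤ 3 * I3 + 6 * ((m+1)*((-(m*I2) - 2*Jv) - Jv) + I3) := by
    rw [← hKeq]; linarith
  have hne : (m:ℝ) + 1 ≠ 0 := hm1.ne'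
  have hfactor : 0 ≤ (m+2) * ((3 * I3 + 6 * ((m+1)*((-(m*I2) - 2*Jv) - Jv) + I3))
      - m^2 * I2) := mul_nonneg hm2.le (by linarith)
  rw [← sub_nonneg]
  have hkey : 0 - (E' + m / (m + 1) * I3
        + ((m + 2) / (m + 1) * ((m + 3) ^ 2 / 36) - (m ^ 2 - m + 2) / 4) * I2)
      = (1/(9*(m+1))) * ((m+2) * ((3 * I3 + 6 * ((m+1)*((-(m*I2) - 2*Jv) - Jv) + I3))
          - m^2 * I2)) := by
    rw [hC2]
    field_simp
    ring
  rw [hkey]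
  exact mul_nonneg (by positivity) hfactor

end SpatialMain

/-- Dissipation estimate for `∫ hᵐ|∇h|²` along the Boussinesq equation
`∂ₜh − div(h∇h) = 0` on `𝕋^d`, for `0 ≤ m ≤ (1+√7)/2`, with
`C_m = ((m+2)/(m+1))·((m+3)²/36) − (m² − m + 2)/4 ≥ 0` (Proposition `convexporous`). -/
theorem boussinesq_hm_gradsq_decay (d : ℕ) (hd : 1 ≤ d) (m : ℝ)
    (hm1 : 0 ≤ m) (hm2 : m ≤ (1 + Real.sqrt 7) / 2)
    (T : ℝ) (h : ℝ × EuclideanSpace ℝ (Fin d) → ℝ)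
    (hsm : ContDiff ℝ (⊤ : ℕ∞) h)
    (hper : ∀ t, ZPeriodic (fun x => h (t, x)))
    (hpos : ∀ t x, 0 < h (t, x))
    (heq : ∀ t ∈ Set.Icc (0 : ℝ) T, ∀ x,
      deriv (fun s => h (s, x)) t
        - (∑ i, pder i (fun y => h (t, y) * pder i (fun z => h (t, z)) y) x) = 0) :
    0 ≤ ((m + 2) / (m + 1)) * ((m + 3) ^ 2 / 36) - (m ^ 2 - m + 2) / 4
    ∧ ∀ t ∈ Set.Icc (0 : ℝ) T,
      deriv (fun s =>
          ∫ x in fundDom d, h (s, x) ^ m * gradSq (fun y => h (s, y)) x) t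
        + (m / (m + 1)) *
          (∫ x in fundDom d, h (t, x) ^ (m + 1) * (lap (fun z => h (t, z)) x) ^ 2)
        + (((m + 2) / (m + 1)) * ((m + 3) ^ 2 / 36) - (m ^ 2 - m + 2) / 4) *
          (∫ x in fundDom d,
            h (t, x) ^ (m - 1) * (gradSq (fun z => h (t, z)) x) ^ 2)
        ≤ 0 := by
  constructor
  · -- nonnegativity of the constant
    have hs7 : Real.sqrt 7 ^ 2 = 7 := Real.sq_sqrt (by norm_num)
    have hs7' : 0 ≤ Real.sqrt 7 := Real.sqrt_nonneg 7
    have hq : 2*m^2 - 2*m - 3 ≤ 0 := by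
      rcases le_or_gt (2*m - 1) 0 with hc | hc
      · nlinarith
      · have hle : 2*m - 1 ≤ Real.sqrt 7 := by linarith
        have h2 : (2*m-1)^2 ≤ Real.sqrt 7 ^ 2 := by nlinarith
        nlinarith [h2, hs7]
    have hkey : m * (2*m^2 - 2*m - 3) ≤ 0 := by
      nlinarith [mul_nonneg hm1 (neg_nonneg.2 hq)]
    have hrw : ((m + 2) / (m + 1)) * ((m + 3) ^ 2 / 36) - (m ^ 2 - m + 2) / 4
        = (-4*m*(2*m^2 - 2*m - 3)) / (36*(m+1)) := by
      have hne : (m:ℝ) + 1 ≠ 0 := by positivity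
      field_simp
      ring
    rw [hrw]
    apply div_nonneg (by nlinarith [hkey]) (by linarith)
  · intro t ht
    have dh : Differentiable ℝ h := hsm.differentiable one_le_infty
    have hu : ContDiff ℝ (⊤:ℕ∞) (fun y => h (t, y)) :=
      hsm.comp (contDiff_const.prodMk contDiff_id)
    have hupos : ∀ x, 0 < (fun y => h (t, y)) x := fun x => hpos t x
    have huper : ZPeriodic (fun y => h (t, y)) := hper t
    have hApos : ∀ p : ℝ × EuclideanSpace ℝ (Fin d), 0 < h p := fun p => by
      have := hpos p.1 p.2
      rwa [Prod.mk.eta] at this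
    set Φ : ℝ × EuclideanSpace ℝ (Fin d) → ℝ :=
      fun p => h p ^ m * ∑ i, fderiv ℝ h p (0, EuclideanSpace.single i 1) ^ 2 with hΦdef
    have hAsm : ContDiff ℝ (⊤:ℕ∞) (fun p : ℝ × EuclideanSpace ℝ (Fin d) => h p ^ m) :=
      contDiff_iff_contDiffAt.2 fun p => hsm.contDiffAt.rpow_const_of_ne (hApos p).ne'
    have hDvi : ∀ i : Fin d, ContDiff ℝ (⊤:ℕ∞)
        (fun p : ℝ × EuclideanSpace ℝ (Fin d) =>
          fderiv ℝ h p (0, EuclideanSpace.single i 1)) :=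
      fun i => contDiff_dv hsm _
    have hBsm : ContDiff ℝ (⊤:ℕ∞) (fun p : ℝ × EuclideanSpace ℝ (Fin d) =>
        ∑ i, fderiv ℝ h p (0, EuclideanSpace.single i 1) ^ 2) :=
      ContDiff.sum fun i _ => (hDvi i).pow 2
    have hΦsm : ContDiff ℝ (⊤:ℕ∞) Φ := hAsm.mul hBsm
    -- rewrite the function being differentiated
    have hfun_eq : (fun s => ∫ x in fundDom d, h (s, x) ^ m * gradSq (fun y => h (s, y)) x)
        = fun s => ∫ x in fundDom d, Φ (s, x) := by
      funext s
      refine MeasureTheory.setIntegral_congr_fun measurableSet_fundDom fun x _ => ?_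
      have hgs : gradSq (fun y => h (s, y)) x
          = ∑ i, fderiv ℝ h (s, x) (0, EuclideanSpace.single i 1) ^ 2 :=
        Finset.sum_congr rfl fun i _ => by rw [pder_slice h dh s x i]
      show h (s, x) ^ m * gradSq (fun y => h (s, y)) x
        = h (s, x) ^ m * ∑ i, fderiv ℝ h (s, x) (0, EuclideanSpace.single i 1) ^ 2
      rw [hgs]
    have hD := hasDerivAt_integral_fundDom Φ hΦsm t
    -- the time-derivative direction: fderiv h (·) (1,0) equals wfun at time t
    have e7 : (fun y => fderiv ℝ h (t, y) (1, 0)) = wfun (fun y => h (t, y)) := by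
      funext y
      rw [← deriv_slice h dh t y]
      have hh := heq t ht y
      have hde : deriv (fun s => h (s, y)) t
          = ∑ i, pder i (fun y' => h (t, y') * pder i (fun z => h (t, z)) y') y := by
        linarith [hh]
      rw [hde]
      have hprod : ∀ i : Fin d,
          pder i (fun y' => h (t, y') * pder i (fun z => h (t, z)) y') y
          = h (t, y) * pder i (pder i (fun z => h (t, z))) y
            + pder i (fun z => h (t, z)) y * pder i (fun y' => h (t, y')) y := fun i =>
        pder_mul (hu.differentiable one_le_infty y)
          ((smooth_pd hu i).differentiable one_le_infty y) i
      rw [Finset.sum_congr rfl fun i _ => hprod i, Finset.sum_add_distrib, ← Finset.mul_sum]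
      have hg : ∑ i, pder i (fun z => h (t, z)) y * pder i (fun y' => h (t, y')) y
          = gradSq (fun y' => h (t, y')) y :=
        Finset.sum_congr rfl fun i _ => (pow_two _).symm
      show h (t, y) * (∑ i, pder i (pder i (fun z => h (t, z))) y)
            + ∑ i, pder i (fun z => h (t, z)) y * pder i (fun y' => h (t, y')) y
          = gradSq (fun y' => h (t, y')) y
            + h (t, y) * lap (fun y' => h (t, y')) y
      rw [hg]
      ring_nf
      rfl
    -- pointwise time derivative of Φ at (t, x)
    have hptw : ∀ x, fderiv ℝ Φ (t, x) (1, 0)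
        = m * h (t, x) ^ (m-1) * wfun (fun y => h (t, y)) x * gradSq (fun y => h (t, y)) x
          + 2 * h (t, x) ^ m *
            ∑ i, pder i (fun y => h (t, y)) x * pder i (wfun (fun y => h (t, y))) x := by
      intro x
      have e1 : fderiv ℝ Φ (t, x) (1, 0)
          = h (t, x) ^ m * fderiv ℝ (fun p : ℝ × EuclideanSpace ℝ (Fin d) =>
              ∑ i, fderiv ℝ h p (0, EuclideanSpace.single i 1) ^ 2) (t, x) (1, 0)
            + (∑ i, fderiv ℝ h (t, x) (0, EuclideanSpace.single i 1) ^ 2) *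
              fderiv ℝ (fun p : ℝ × EuclideanSpace ℝ (Fin d) => h p ^ m) (t, x) (1, 0) := by
        rw [hΦdef]
        exact dv_mul (hAsm.differentiable one_le_infty _)
          (hBsm.differentiable one_le_infty _) _
      have e2 : fderiv ℝ (fun p : ℝ × EuclideanSpace ℝ (Fin d) => h p ^ m) (t, x) (1, 0)
          = m * h (t, x) ^ (m-1) * fderiv ℝ h (t, x) (1, 0) :=
        dv_rpow (dh _) (hApos _) m _
      have e3 : fderiv ℝ (fun p : ℝ × EuclideanSpace ℝ (Fin d) =>
            ∑ i, fderiv ℝ h p (0, EuclideanSpace.single i 1) ^ 2) (t, x) (1, 0)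
          = ∑ i, fderiv ℝ (fun p : ℝ × EuclideanSpace ℝ (Fin d) =>
              fderiv ℝ h p (0, EuclideanSpace.single i 1) ^ 2) (t, x) (1, 0) :=
        dv_sum _ (fun i _ => ((hDvi i).pow 2).differentiable one_le_infty _) _
      have e4 : ∀ i : Fin d, fderiv ℝ (fun p : ℝ × EuclideanSpace ℝ (Fin d) =>
            fderiv ℝ h p (0, EuclideanSpace.single i 1) ^ 2) (t, x) (1, 0)
          = 2 * fderiv ℝ h (t, x) (0, EuclideanSpace.single i 1) *
            fderiv ℝ (fun p : ℝ × EuclideanSpace ℝ (Fin d) =>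
              fderiv ℝ h p (0, EuclideanSpace.single i 1)) (t, x) (1, 0) :=
        fun i => dv_sq ((hDvi i).differentiable one_le_infty _) _
      have e56 : ∀ i : Fin d, fderiv ℝ (fun p : ℝ × EuclideanSpace ℝ (Fin d) =>
            fderiv ℝ h p (0, EuclideanSpace.single i 1)) (t, x) (1, 0)
          = pder i (wfun (fun y => h (t, y))) x := by
        intro i
        rw [dv_comm hsm (t, x) (0, EuclideanSpace.single i 1) (1, 0)]
        rw [← pder_slice (fun p => fderiv ℝ h p (1, 0))
          ((contDiff_dv hsm (1, 0)).differentiable one_le_infty) t x i]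
        rw [show (fun y => fderiv ℝ h (t, y) (1, 0)) = wfun (fun y => h (t, y)) from e7]
      have eDvi : ∀ i : Fin d, fderiv ℝ h (t, x) (0, EuclideanSpace.single i 1)
          = pder i (fun y => h (t, y)) x := fun i => (pder_slice h dh t x i).symm
      have e8 : (∑ i, fderiv ℝ h (t, x) (0, EuclideanSpace.single i 1) ^ 2)
          = gradSq (fun y => h (t, y)) x :=
        Finset.sum_congr rfl fun i _ => by rw [eDvi i]
      have e7x : fderiv ℝ h (t, x) (1, 0) = wfun (fun y => h (t, y)) x := congrFun e7 x
      rw [e1, e2, e3, Finset.sum_congr rfl fun i _ => e4 i, e7x, e8]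
      have : ∑ i, 2 * fderiv ℝ h (t, x) (0, EuclideanSpace.single i 1) *
            fderiv ℝ (fun p : ℝ × EuclideanSpace ℝ (Fin d) =>
              fderiv ℝ h p (0, EuclideanSpace.single i 1)) (t, x) (1, 0)
          = 2 * ∑ i, pder i (fun y => h (t, y)) x * pder i (wfun (fun y => h (t, y))) x := by
        rw [Finset.mul_sum]
        refine Finset.sum_congr rfl fun i _ => ?_
        rw [e56 i, eDvi i]
        ring
      rw [this]
      ring
    have hend : (∫ x in fundDom d, fderiv ℝ Φ (t, x) (1, 0))
        = ∫ x in fundDom d,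
            (m * h (t, x) ^ (m-1) * wfun (fun y => h (t, y)) x * gradSq (fun y => h (t, y)) x
              + 2 * h (t, x) ^ m *
                ∑ i, pder i (fun y => h (t, y)) x * pder i (wfun (fun y => h (t, y))) x) :=
      MeasureTheory.setIntegral_congr_fun measurableSet_fundDom fun x _ => hptw x
    rw [hfun_eq, hD.deriv, hend]
    exact spatial_main hd hu huper hupos hm1
end

section
/- Let h be a smooth, strictly positive solution on [0,T] of the one-dimensional Boussinesq equation ∂_t h − ∂_x(h ∂_x h) = 0 on 𝕋 = ℝ/ℤ. Then for every t ∈ [0,T], (d/dt) ∫_𝕋 (∂_x h) arctan(∂_x h) dx + ∫_𝕋 2 h (∂_x^2 h)^2 / (1+(∂_x h)^2)^2 dx = 0; in particular (d/dt) ∫_𝕋 (∂_x h) arctan(∂_x h) dx ≤ 0. -/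
open MeasureTheory Real

section Aux
variable {f : ℝ × ℝ → ℝ}

private lemma aux_hdx (hf : ContDiff ℝ (⊤ : ℕ∞) f) (t x : ℝ) :
    HasDerivAt (fun y => f (t, y)) (fderiv ℝ f (t, x) ((0:ℝ), (1:ℝ))) x := by
  have hline : HasDerivAt (fun y : ℝ => ((t, y) : ℝ × ℝ)) ((0:ℝ), (1:ℝ)) x :=
    (hasDerivAt_const x t).prodMk (hasDerivAt_id x)
  exact (hf.differentiable (by simp) (t, x)).hasFDerivAt.comp_hasDerivAt x hline

private lemma aux_hdt (hf : ContDiff ℝ (⊤ : ℕ∞) f) (t x : ℝ) :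
    HasDerivAt (fun s => f (s, x)) (fderiv ℝ f (t, x) ((1:ℝ), (0:ℝ))) t := by
  have hline : HasDerivAt (fun s : ℝ => ((s, x) : ℝ × ℝ)) ((1:ℝ), (0:ℝ)) t :=
    (hasDerivAt_id t).prodMk (hasDerivAt_const t x)
  exact (hf.differentiable (by simp) (t, x)).hasFDerivAt.comp_hasDerivAt t hline

private lemma aux_cd (hf : ContDiff ℝ (⊤ : ℕ∞) f) (v : ℝ × ℝ) :
    ContDiff ℝ (⊤ : ℕ∞) (fun z => fderiv ℝ f z v) :=
  (ContinuousLinearMap.apply ℝ ℝ v).contDiff.comp (hf.fderiv_right (mod_cast le_top))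

private lemma aux_schwarz (hf : ContDiff ℝ (⊤ : ℕ∞) f) (z : ℝ × ℝ) :
    fderiv ℝ (fun w => fderiv ℝ f w ((0:ℝ),(1:ℝ))) z ((1:ℝ),(0:ℝ))
      = fderiv ℝ (fun w => fderiv ℝ f w ((1:ℝ),(0:ℝ))) z ((0:ℝ),(1:ℝ)) := by
  have hdf : Differentiable ℝ (fderiv ℝ f) :=
    (hf.fderiv_right (m := (⊤:ℕ∞)) (mod_cast le_top)).differentiable (by simp)
  have h1 : ∀ v : ℝ × ℝ, fderiv ℝ (fun w => fderiv ℝ f w v) z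
      = (ContinuousLinearMap.apply ℝ ℝ v).comp (fderiv ℝ (fderiv ℝ f) z) := fun v =>
    (((ContinuousLinearMap.apply ℝ ℝ v).hasFDerivAt).comp z (hdf z).hasFDerivAt).fderiv
  rw [h1, h1]
  simp only [ContinuousLinearMap.coe_comp', Function.comp_apply,
    ContinuousLinearMap.apply_apply]
  exact (hf.contDiffAt.isSymmSndFDerivAt (by simpa using WithTop.coe_le_coe.mpr (le_top : (2:ℕ∞) ≤ ⊤))) _ _

private lemma aux_per (hf : ContDiff ℝ (⊤ : ℕ∞) f) (hp : ∀ t x, f (t, x + 1) = f (t, x)) :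
    ∀ t x, fderiv ℝ f (t, x + 1) ((0:ℝ),(1:ℝ)) = fderiv ℝ f (t, x) ((0:ℝ),(1:ℝ)) := by
  intro t x
  have h1 := aux_hdx hf t x
  have h2 : HasDerivAt (fun y => f (t, y + 1))
      (fderiv ℝ f (t, x + 1) ((0:ℝ),(1:ℝ)) * 1) x :=
    by have := (aux_hdx hf t (x + 1)).comp x ((hasDerivAt_id x).add_const 1); exact this
  have h3 : (fun y => f (t, y + 1)) = fun y => f (t, y) := funext fun y => hp t y
  rw [h3] at h2
  simpa using h2.unique h1

end Aux

private lemma aux_dF (p : ℝ) :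
    HasDerivAt (fun z : ℝ => arctan z + z / (1 + z ^ 2)) (2 / (1 + p ^ 2) ^ 2) p := by
  have h0 : (1 + p ^ 2) ≠ 0 := by positivity
  have h1 : HasDerivAt (fun z : ℝ => z / (1 + z ^ 2))
      ((1 * (1 + p ^ 2) - p * (0 + 2 * p ^ 1)) / (1 + p ^ 2) ^ 2) p :=
    (hasDerivAt_id p).div ((hasDerivAt_const p 1).add (hasDerivAt_pow 2 p)) h0
  have h2 : HasDerivAt (fun z : ℝ => arctan z + z / (1 + z ^ 2)) _ p := (Real.hasDerivAt_arctan p).add h1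
  convert h2 using 1
  field_simp
  ring

private lemma aux_G0 (p : ℝ) :
    HasDerivAt (fun z : ℝ => arctan z - z / (1 + z ^ 2)) (2 * p ^ 2 / (1 + p ^ 2) ^ 2) p := by
  have h0 : (1 + p ^ 2) ≠ 0 := by positivity
  have h1 : HasDerivAt (fun z : ℝ => z / (1 + z ^ 2))
      ((1 * (1 + p ^ 2) - p * (0 + 2 * p ^ 1)) / (1 + p ^ 2) ^ 2) p :=
    (hasDerivAt_id p).div ((hasDerivAt_const p 1).add (hasDerivAt_pow 2 p)) h0
  have h2 : HasDerivAt (fun z : ℝ => arctan z - z / (1 + z ^ 2)) _ p := (Real.hasDerivAt_arctan p).sub h1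
  convert h2 using 1
  field_simp
  ring

/-- For the one-dimensional Boussinesq equation `∂ₜh − ∂ₓ(h∂ₓh) = 0` on `𝕋 = ℝ/ℤ`,
`(d/dt)∫(∂ₓh)arctan(∂ₓh) + ∫ 2h(∂ₓ²h)²/(1+(∂ₓh)²)² = 0`; in particular
`∫(∂ₓh)arctan(∂ₓh)` is nonincreasing (Proposition `prop:C2Boussinesq`). -/
theorem boussinesq_1d_arctan_decay
    (T : ℝ) (h : ℝ × ℝ → ℝ)
    (hsm : ContDiff ℝ (⊤ : ℕ∞) h)
    (hper : ∀ t x, h (t, x + 1) = h (t, x))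
    (hpos : ∀ t x, 0 < h (t, x))
    (heq : ∀ t ∈ Set.Icc (0 : ℝ) T, ∀ x : ℝ,
      deriv (fun s => h (s, x)) t
        - deriv (fun y => h (t, y) * deriv (fun z => h (t, z)) y) x = 0) :
    ∀ t ∈ Set.Icc (0 : ℝ) T,
      deriv (fun s => ∫ x in Set.Ico (0 : ℝ) 1,
            deriv (fun y => h (s, y)) x *
              Real.arctan (deriv (fun y => h (s, y)) x)) t
          + (∫ x in Set.Ico (0 : ℝ) 1,
              2 * h (t, x) * (deriv (fun y => deriv (fun z => h (t, z)) y) x) ^ 2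
                / (1 + (deriv (fun z => h (t, z)) x) ^ 2) ^ 2) = 0
      ∧ deriv (fun s => ∫ x in Set.Ico (0 : ℝ) 1,
            deriv (fun y => h (s, y)) x *
              Real.arctan (deriv (fun y => h (s, y)) x)) t ≤ 0 := by
  intro t ht
  -- partial derivative functions
  set P : ℝ × ℝ → ℝ := fun z => fderiv ℝ h z ((0:ℝ),(1:ℝ)) with hPdef
  have hPsm : ContDiff ℝ (⊤ : ℕ∞) P := aux_cd hsm _
  set W : ℝ × ℝ → ℝ := fun z => h z * P z with hWdef
  have hWsm : ContDiff ℝ (⊤ : ℕ∞) W := hsm.mul hPsm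
  set Q : ℝ × ℝ → ℝ := fun z => fderiv ℝ P z ((0:ℝ),(1:ℝ)) with hQdef
  have hQsm : ContDiff ℝ (⊤ : ℕ∞) Q := aux_cd hPsm _
  set R : ℝ × ℝ → ℝ := fun z => fderiv ℝ W z ((0:ℝ),(1:ℝ)) with hRdef
  have hRsm : ContDiff ℝ (⊤ : ℕ∞) R := aux_cd hWsm _
  set S : ℝ × ℝ → ℝ := fun z => fderiv ℝ R z ((0:ℝ),(1:ℝ)) with hSdef
  have hSsm : ContDiff ℝ (⊤ : ℕ∞) S := aux_cd hRsm _
  -- x-derivative facts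
  have hdPx : ∀ t' x, HasDerivAt (fun y => h (t', y)) (P (t', x)) x :=
    fun t' x => aux_hdx hsm t' x
  have hdQx : ∀ t' x, HasDerivAt (fun y => P (t', y)) (Q (t', x)) x :=
    fun t' x => aux_hdx hPsm t' x
  have hdRx : ∀ t' x, HasDerivAt (fun y => W (t', y)) (R (t', x)) x :=
    fun t' x => aux_hdx hWsm t' x
  have hdSx : ∀ t' x, HasDerivAt (fun y => R (t', y)) (S (t', x)) x :=
    fun t' x => aux_hdx hRsm t' x
  have edP : ∀ t' x, deriv (fun y => h (t', y)) x = P (t', x) := fun t' x => (hdPx t' x).deriv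
  have edQ : ∀ t' x, deriv (fun y => P (t', y)) x = Q (t', x) := fun t' x => (hdQx t' x).deriv
  simp only [edP, edQ]
  -- PDE in terms of partials
  have hpde : ∀ x, fderiv ℝ h (t, x) ((1:ℝ),(0:ℝ)) = R (t, x) := by
    intro x
    have h0 := heq t ht x
    have h1 : deriv (fun s => h (s, x)) t = fderiv ℝ h (t, x) ((1:ℝ),(0:ℝ)) :=
      (aux_hdt hsm t x).deriv
    have h2 : (fun y => h (t, y) * deriv (fun z => h (t, z)) y) = fun y => W (t, y) := by
      funext y; rw [edP]
    rw [h1, h2, (hdRx t x).deriv] at h0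
    linarith
  -- time derivative of P equals S on the slice {t} × ℝ (Schwarz + PDE)
  have hPt_eq : ∀ x, fderiv ℝ P (t, x) ((1:ℝ),(0:ℝ)) = S (t, x) := by
    intro x
    have h1 := aux_schwarz hsm (t, x)
    have h2 : (fun y => fderiv ℝ h (t, y) ((1:ℝ),(0:ℝ))) = fun y => R (t, y) :=
      funext fun y => hpde y
    have h3 : HasDerivAt (fun y => fderiv ℝ h (t, y) ((1:ℝ),(0:ℝ)))
        (fderiv ℝ (fun w => fderiv ℝ h w ((1:ℝ),(0:ℝ))) (t, x) ((0:ℝ),(1:ℝ))) x :=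
      aux_hdx (aux_cd hsm _) t x
    rw [h2] at h3
    exact h1.trans (h3.unique (hdSx t x))
  -- periodicity
  have hPper : ∀ t' x, P (t', x + 1) = P (t', x) := aux_per hsm hper
  have hWper : ∀ t' x, W (t', x + 1) = W (t', x) := by
    intro t' x; simp only [hWdef]; rw [hper, hPper]
  have hRper : ∀ t' x, R (t', x + 1) = R (t', x) := aux_per hWsm hWper
  -- continuity facts
  have hcP : Continuous P := hPsm.continuous
  have hcQ : Continuous Q := hQsm.continuous
  have hcR : Continuous R := hRsm.continuous
  have hcS : Continuous S := hSsm.continuous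
  have hch : Continuous h := hsm.continuous
  have hne : ∀ p : ℝ, (1 : ℝ) + p ^ 2 ≠ 0 := fun p => by positivity
  have hcdF : Continuous fun z : ℝ × ℝ => arctan (P z) + P z / (1 + P z ^ 2) :=
    (Real.continuous_arctan.comp hcP).add
      (hcP.div (continuous_const.add (hcP.pow 2)) fun z => hne (P z))
  have hc2 : Continuous fun z : ℝ × ℝ => 2 * h z * Q z ^ 2 / (1 + P z ^ 2) ^ 2 :=
    ((continuous_const.mul hch).mul (hcQ.pow 2)).div
      ((continuous_const.add (hcP.pow 2)).pow 2) fun z => pow_ne_zero 2 (hne (P z))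
  have hint1 : IntegrableOn
      (fun x => (arctan (P (t, x)) + P (t, x) / (1 + P (t, x) ^ 2)) * S (t, x))
      (Set.Ico (0:ℝ) 1) volume :=
    (((hcdF.comp (Continuous.prodMk_right t)).mul (hcS.comp (Continuous.prodMk_right t))).integrableOn_Icc
        (a := (0:ℝ)) (b := 1)).mono_set Set.Ico_subset_Icc_self
  have hint2 : IntegrableOn
      (fun x => 2 * h (t, x) * Q (t, x) ^ 2 / (1 + P (t, x) ^ 2) ^ 2)
      (Set.Ico (0:ℝ) 1) volume :=
    ((hc2.comp (Continuous.prodMk_right t)).integrableOn_Icc (a := (0:ℝ)) (b := 1)).mono_set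
      Set.Ico_subset_Icc_self
  -- the spatial integration-by-parts identity
  have key : (∫ x in Set.Ico (0:ℝ) 1,
        (arctan (P (t, x)) + P (t, x) / (1 + P (t, x) ^ 2)) * S (t, x))
      + (∫ x in Set.Ico (0:ℝ) 1,
        2 * h (t, x) * Q (t, x) ^ 2 / (1 + P (t, x) ^ 2) ^ 2) = 0 := by
    set φ : ℝ → ℝ := fun x =>
      (arctan (P (t, x)) + P (t, x) / (1 + P (t, x) ^ 2)) * R (t, x)
        - (arctan (P (t, x)) - P (t, x) / (1 + P (t, x) ^ 2)) with hφdef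
    set ψ : ℝ → ℝ := fun x =>
      (arctan (P (t, x)) + P (t, x) / (1 + P (t, x) ^ 2)) * S (t, x)
        + 2 * h (t, x) * Q (t, x) ^ 2 / (1 + P (t, x) ^ 2) ^ 2 with hψdef
    have hφd : ∀ x, HasDerivAt φ (ψ x) x := by
      intro x
      have hR_eq : R (t, x) = P (t, x) * P (t, x) + h (t, x) * Q (t, x) :=
        (hdRx t x).unique ((hdPx t x).mul (hdQx t x))
      have h1 : HasDerivAt (fun x => arctan (P (t, x)) + P (t, x) / (1 + P (t, x) ^ 2))
          (2 / (1 + P (t, x) ^ 2) ^ 2 * Q (t, x)) x :=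
        by have := (aux_dF (P (t, x))).comp x (hdQx t x); exact this
      have h2 : HasDerivAt (fun x => arctan (P (t, x)) - P (t, x) / (1 + P (t, x) ^ 2))
          (2 * P (t, x) ^ 2 / (1 + P (t, x) ^ 2) ^ 2 * Q (t, x)) x :=
        by have := (aux_G0 (P (t, x))).comp x (hdQx t x); exact this
      have h4 : HasDerivAt φ
          (2 / (1 + P (t, x) ^ 2) ^ 2 * Q (t, x) * R (t, x)
            + (arctan (P (t, x)) + P (t, x) / (1 + P (t, x) ^ 2)) * S (t, x)
            - 2 * P (t, x) ^ 2 / (1 + P (t, x) ^ 2) ^ 2 * Q (t, x)) x :=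
        (h1.mul (hdSx t x)).sub h2
      convert h4 using 1
      rw [hψdef, hR_eq]
      have := hne (P (t, x))
      field_simp
      ring
    have hψc : Continuous ψ :=
      ((hcdF.comp (Continuous.prodMk_right t)).mul (hcS.comp (Continuous.prodMk_right t))).add
        (hc2.comp (Continuous.prodMk_right t))
    have hφper : φ 1 = φ 0 := by
      have e1 : P (t, 1) = P (t, 0) := by simpa using hPper t 0
      have e2 : R (t, 1) = R (t, 0) := by simpa using hRper t 0
      simp only [hφdef, e1, e2]
    have hint : ∫ x in Set.Ico (0:ℝ) 1, ψ x = φ 1 - φ 0 := by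
      rw [MeasureTheory.integral_Ico_eq_integral_Ioo,
        ← MeasureTheory.integral_Ioc_eq_integral_Ioo,
        ← intervalIntegral.integral_of_le zero_le_one]
      exact intervalIntegral.integral_eq_sub_of_hasDerivAt (fun x _ => hφd x)
        (hψc.intervalIntegrable 0 1)
    have hsplit : ∫ x in Set.Ico (0:ℝ) 1, ψ x
        = (∫ x in Set.Ico (0:ℝ) 1,
            (arctan (P (t, x)) + P (t, x) / (1 + P (t, x) ^ 2)) * S (t, x))
          + (∫ x in Set.Ico (0:ℝ) 1,
            2 * h (t, x) * Q (t, x) ^ 2 / (1 + P (t, x) ^ 2) ^ 2) := by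
      rw [hψdef, ← MeasureTheory.integral_add hint1 hint2]
    rw [← hsplit, hint, hφper, sub_self]
  -- differentiation under the integral
  have hI : HasDerivAt (fun s => ∫ x in Set.Ico (0:ℝ) 1, P (s, x) * arctan (P (s, x)))
      (∫ x in Set.Ico (0:ℝ) 1,
        (arctan (P (t, x)) + P (t, x) / (1 + P (t, x) ^ 2))
          * fderiv ℝ P (t, x) ((1:ℝ),(0:ℝ))) t := by
    have hcPt : Continuous fun z : ℝ × ℝ => fderiv ℝ P z ((1:ℝ),(0:ℝ)) :=
      (aux_cd hPsm _).continuous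
    have hcF' : Continuous fun z : ℝ × ℝ =>
        (arctan (P z) + P z / (1 + P z ^ 2)) * fderiv ℝ P z ((1:ℝ),(0:ℝ)) :=
      hcdF.mul hcPt
    obtain ⟨C, hC⟩ := ((isCompact_Icc (a := t - 1) (b := t + 1)).prod
      (isCompact_Icc (a := (0:ℝ)) (b := 1))).exists_bound_of_continuousOn hcF'.continuousOn
    have main := hasDerivAt_integral_of_dominated_loc_of_deriv_le
      (F := fun s a => P (s, a) * arctan (P (s, a)))
      (F' := fun s a => (arctan (P (s, a)) + P (s, a) / (1 + P (s, a) ^ 2))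
        * fderiv ℝ P (s, a) ((1:ℝ),(0:ℝ)))
      (μ := volume.restrict (Set.Ico (0:ℝ) 1))
      (x₀ := t) (bound := fun _ => C) (s := Metric.ball t 1) (Metric.ball_mem_nhds t one_pos)
      ?_ ?_ ?_ ?_ ?_ ?_
    · exact main.2
    · exact Filter.Eventually.of_forall fun s =>
        (((hcP.comp (Continuous.prodMk_right s)).mul
          (Real.continuous_arctan.comp (hcP.comp (Continuous.prodMk_right s))))).aestronglyMeasurable
    · exact (((hcP.comp (Continuous.prodMk_right t)).mul
        (Real.continuous_arctan.comp (hcP.comp (Continuous.prodMk_right t)))).integrableOn_Icc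
          (a := (0:ℝ)) (b := 1)).mono_set Set.Ico_subset_Icc_self
    · exact (hcF'.comp (Continuous.prodMk_right t)).aestronglyMeasurable
    · filter_upwards [ae_restrict_mem measurableSet_Ico] with a ha
      intro s hs
      have hs' : s ∈ Set.Icc (t - 1) (t + 1) := by
        rw [Metric.mem_ball, Real.dist_eq] at hs
        have := abs_lt.mp hs
        constructor <;> linarith [this.1, this.2]
      exact hC (s, a) ⟨hs', Set.Ico_subset_Icc_self ha⟩
    · exact (integrableOn_const (by simp [Real.volume_Ico]) (by simp) : IntegrableOn (fun _ => C) (Set.Ico (0:ℝ) 1) volume)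
    · refine Filter.Eventually.of_forall fun a => fun s _ => ?_
      have hp : HasDerivAt (fun s => P (s, a)) (fderiv ℝ P (s, a) ((1:ℝ),(0:ℝ))) s :=
        aux_hdt hPsm s a
      have : HasDerivAt (fun s => P (s, a) * arctan (P (s, a))) _ s := hp.mul (((Real.hasDerivAt_arctan (P (s, a))).comp s hp : HasDerivAt (arctan ∘ fun s => P (s, a)) _ s))
      refine this.congr_deriv ?_
      have := hne (P (s, a))
      field_simp
  have hderiv_eq : deriv (fun s => ∫ x in Set.Ico (0:ℝ) 1, P (s, x) * arctan (P (s, x))) t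
      = ∫ x in Set.Ico (0:ℝ) 1,
          (arctan (P (t, x)) + P (t, x) / (1 + P (t, x) ^ 2)) * S (t, x) := by
    rw [hI.deriv]
    simp only [hPt_eq]
  have hnn : 0 ≤ ∫ x in Set.Ico (0:ℝ) 1,
      2 * h (t, x) * Q (t, x) ^ 2 / (1 + P (t, x) ^ 2) ^ 2 := by
    refine setIntegral_nonneg measurableSet_Ico fun x _ => ?_
    have := (hpos t x).le
    positivity
  refine ⟨by rw [hderiv_eq]; exact key, ?_⟩
  rw [hderiv_eq]
  linarith
end
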